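/- arXiv:1310.6712 — 7 statements merged into one kernel-verified Lean document; each statement's English description precedes it below -/
import Mathlib

section
/- Let k be a positive integer, define P(z_1, ..., z_k) = (z_1^k + ⋯ + z_k^k)/k − z_1 ⋯ z_k, and let z_1, ..., z_k be complex numbers in the open unit disk 𝔻. Then |P(z_1, ..., z_{k−1}, z_k) − P(z_1, ..., z_{k−1}, z_1)| ≤ (k−1) · max_{i,j ∈ {1,...,k}} |z_i − z_j|^2. -/
/-- `P(z_1, …, z_k) = (z_1^k + ⋯ + z_k^k)/k − z_1 ⋯ z_k`. -/
noncomputable def P (k : ℕ) (z : Fin k → ℂ) : ℂ :=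
  (∑ j, z j ^ k) / (k : ℂ) - ∏ j, z j

/-- Difference of products of numbers in the closed unit disk. -/
lemma abs_prod_sub_prod_le (s : Finset ℕ) (u v : ℕ → ℂ)
    (hu : ∀ i ∈ s, ‖u i‖ ≤ 1) (hv : ∀ i ∈ s, ‖v i‖ ≤ 1) :
    ‖∏ i ∈ s, u i - ∏ i ∈ s, v i‖ ≤ ∑ i ∈ s, ‖u i - v i‖ := by
  induction s using Finset.induction with
  | empty => simp
  | @insert a s ha ih =>
    rw [Finset.prod_insert ha, Finset.prod_insert ha, Finset.sum_insert ha]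
    have key : u a * ∏ i ∈ s, u i - v a * ∏ i ∈ s, v i
        = u a * (∏ i ∈ s, u i - ∏ i ∈ s, v i) + (u a - v a) * ∏ i ∈ s, v i := by ring
    rw [key]
    refine (norm_add_le _ _).trans ?_
    rw [norm_mul, norm_mul]
    have h1 : ‖u a‖ * ‖∏ i ∈ s, u i - ∏ i ∈ s, v i‖
        ≤ ∑ i ∈ s, ‖u i - v i‖ := by
      calc ‖u a‖ * ‖∏ i ∈ s, u i - ∏ i ∈ s, v i‖
          ≤ 1 * ‖∏ i ∈ s, u i - ∏ i ∈ s, v i‖ := by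
            gcongr
            exact hu a (Finset.mem_insert_self a s)
        _ = ‖∏ i ∈ s, u i - ∏ i ∈ s, v i‖ := one_mul _
        _ ≤ _ := ih (fun i hi => hu i (Finset.mem_insert_of_mem hi))
              (fun i hi => hv i (Finset.mem_insert_of_mem hi))
    have h2 : ‖∏ i ∈ s, v i‖ ≤ 1 := by
      rw [norm_prod]
      exact Finset.prod_le_one (fun i _ => norm_nonneg _)
        (fun i hi => hv i (Finset.mem_insert_of_mem hi))
    have h3 : ‖u a - v a‖ * ‖∏ i ∈ s, v i‖
        ≤ ‖u a - v a‖ :=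
      mul_le_of_le_one_right (norm_nonneg _) h2
    linarith

/-- If `z_1, …, z_k` lie in the open unit disk, then
`|P(z_1, …, z_{k−1}, z_k) − P(z_1, …, z_{k−1}, z_1)| ≤ (k−1) · max_{i,j} |z_i − z_j|²`. -/
theorem stmt_3 (k : ℕ) (hk : 0 < k) (z : Fin k → ℂ)
    (hz : ∀ j, ‖z j‖ < 1) :
    ‖P k z -
        P k (Function.update z ⟨k - 1, Nat.sub_lt hk Nat.one_pos⟩ (z ⟨0, hk⟩))‖ ≤
      ((k - 1 : ℕ) : ℝ) *
        Finset.univ.sup'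
          (Finset.univ_nonempty_iff.mpr
            (nonempty_prod.mpr ⟨Fin.pos_iff_nonempty.mp hk, Fin.pos_iff_nonempty.mp hk⟩))
          (fun p : Fin k × Fin k => ‖z p.1 - z p.2‖ ^ 2) := by
  obtain ⟨n, rfl⟩ : ∃ n, k = n + 1 := ⟨k - 1, (Nat.succ_pred_eq_of_pos hk).symm⟩
  have hidx : (⟨n + 1 - 1, Nat.sub_lt hk Nat.one_pos⟩ : Fin (n + 1)) = Fin.last n := rfl
  have hidx0 : (⟨0, hk⟩ : Fin (n + 1)) = 0 := rfl
  rw [hidx, hidx0]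
  set a := z (Fin.last n) with ha
  set b := z (0 : Fin (n + 1)) with hb
  set w := Function.update z (Fin.last n) b with hw
  set Q := ∏ j : Fin n, z j.castSucc with hQ
  set ne1 := Finset.univ_nonempty_iff.mpr
      (nonempty_prod.mpr ⟨Fin.pos_iff_nonempty.mp hk, Fin.pos_iff_nonempty.mp hk⟩)
  set S := Finset.univ.sup' ne1
      (fun p : Fin (n + 1) × Fin (n + 1) => ‖z p.1 - z p.2‖ ^ 2) with hS
  set M := Finset.univ.sup' ne1
      (fun p : Fin (n + 1) × Fin (n + 1) => ‖z p.1 - z p.2‖) with hMdef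
  have hM : ∀ i j : Fin (n + 1), ‖z i - z j‖ ≤ M := fun i j =>
    Finset.le_sup' (f := fun p : Fin (n + 1) × Fin (n + 1) => ‖z p.1 - z p.2‖)
      (Finset.mem_univ (i, j))
  have hM0 : 0 ≤ M := (norm_nonneg _).trans (hM 0 0)
  have hMS : M * M ≤ S := by
    obtain ⟨p, _, hp⟩ := Finset.exists_mem_eq_sup' ne1
      (fun p : Fin (n + 1) × Fin (n + 1) => ‖z p.1 - z p.2‖)
    calc M * M = ‖z p.1 - z p.2‖ ^ 2 := by rw [← hp, hMdef]; ring
      _ ≤ S := Finset.le_sup'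
          (f := fun p : Fin (n + 1) × Fin (n + 1) => ‖z p.1 - z p.2‖ ^ 2)
          (Finset.mem_univ p)
  have hc : ((n : ℂ) + 1) ≠ 0 := by
    exact_mod_cast (Nat.cast_ne_zero (R := ℂ)).mpr (Nat.succ_ne_zero n)
  -- the key algebraic identity
  have hPdiff : P (n + 1) z - P (n + 1) w
      = (a - b) * ((∑ i ∈ Finset.range (n + 1), a ^ i * b ^ (n - i)) / ((n : ℂ) + 1) - Q) := by
    have hsum : ∑ j, z j ^ (n + 1) - ∑ j, w j ^ (n + 1) = a ^ (n + 1) - b ^ (n + 1) := by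
      rw [← Finset.sum_sub_distrib]
      rw [Finset.sum_eq_single (Fin.last n)]
      · simp [hw, Function.update_self, ha]
      · intro j _ hj
        simp [hw, Function.update_of_ne hj]
      · simp
    have hprodz : ∏ j, z j = Q * a := Fin.prod_univ_castSucc z
    have hprodw : ∏ j, w j = Q * b := by
      rw [Fin.prod_univ_castSucc]
      congr 1
      · exact Finset.prod_congr rfl fun j _ =>
          Function.update_of_ne (Fin.castSucc_lt_last j).ne b z
      · exact Function.update_self _ _ _
    have hgeom : (∑ i ∈ Finset.range (n + 1), a ^ i * b ^ (n - i)) * (a - b)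
        = a ^ (n + 1) - b ^ (n + 1) := by
      simpa using geom_sum₂_mul a b (n + 1)
    unfold P
    rw [show ((↑(n + 1) : ℂ)) = (n : ℂ) + 1 by push_cast; ring]
    rw [sub_sub_sub_comm, div_sub_div_same, hsum, hprodz, hprodw, ← hgeom]
    field_simp
  -- bound on each term
  have hterm : ∀ i ∈ Finset.range (n + 1),
      ‖a ^ i * b ^ (n - i) - Q‖ ≤ (n : ℝ) * M := by
    intro i hi
    have hi' : i ≤ n := Nat.lt_succ_iff.mp (Finset.mem_range.mp hi)
    set u : ℕ → ℂ := fun m => if m < i then a else b with hu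
    set v : ℕ → ℂ := fun m => if h : m < n then z (Fin.castSucc ⟨m, h⟩) else 1 with hv
    have hprodu : ∏ m ∈ Finset.range n, u m = a ^ i * b ^ (n - i) := by
      rw [hu, Finset.prod_ite, Finset.prod_const, Finset.prod_const]
      congr 2
      · have : Finset.filter (fun m => m < i) (Finset.range n) = Finset.range i := by
          ext m; simp; omega
        rw [this, Finset.card_range]
      · have : Finset.filter (fun m => ¬ m < i) (Finset.range n) = Finset.Ico i n := by
          ext m; simp; omega
        rw [this, Nat.card_Ico]
    have hprodv : ∏ m ∈ Finset.range n, v m = Q := by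
      rw [← Fin.prod_univ_eq_prod_range, hQ]
      refine Finset.prod_congr rfl fun j _ => ?_
      rw [hv]; dsimp only
      rw [dif_pos j.isLt]
    rw [← hprodu, ← hprodv]
    have key := abs_prod_sub_prod_le (Finset.range n) u v
      (fun m _ => by
        rw [hu]; dsimp only; split <;> exact (hz _).le)
      (fun m hm => by
        rw [hv]; dsimp only
        rw [dif_pos (Finset.mem_range.mp hm)]; exact (hz _).le)
    refine key.trans ?_
    have : ∀ m ∈ Finset.range n, ‖u m - v m‖ ≤ M := by
      intro m hm
      have hmn := Finset.mem_range.mp hm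
      rw [hu, hv]; dsimp only
      rw [dif_pos hmn]
      split <;> exact hM _ _
    calc ∑ m ∈ Finset.range n, ‖u m - v m‖
        ≤ (Finset.range n).card • M := Finset.sum_le_card_nsmul _ _ _ this
      _ = (n : ℝ) * M := by rw [Finset.card_range, nsmul_eq_mul]
  -- bound on the second factor
  have hG : ‖(∑ i ∈ Finset.range (n + 1), a ^ i * b ^ (n - i)) / ((n : ℂ) + 1) - Q‖
      ≤ (n : ℝ) * M := by
    have hrw : (∑ i ∈ Finset.range (n + 1), a ^ i * b ^ (n - i)) / ((n : ℂ) + 1) - Q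
        = (∑ i ∈ Finset.range (n + 1), (a ^ i * b ^ (n - i) - Q)) / ((n : ℂ) + 1) := by
      rw [Finset.sum_sub_distrib, Finset.sum_const, Finset.card_range, nsmul_eq_mul]
      field_simp
      push_cast; ring
    rw [hrw, norm_div]
    have habs : ‖(n : ℂ) + 1‖ = (n : ℝ) + 1 := by
      rw [show ((n : ℂ) + 1) = ((n + 1 : ℕ) : ℂ) by push_cast; ring, Complex.norm_natCast]
      push_cast; ring
    rw [habs, div_le_iff₀ (by positivity)]
    calc ‖∑ i ∈ Finset.range (n + 1), (a ^ i * b ^ (n - i) - Q)‖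
        ≤ ∑ i ∈ Finset.range (n + 1), ‖a ^ i * b ^ (n - i) - Q‖ :=
          norm_sum_le _ _
      _ ≤ (Finset.range (n + 1)).card • ((n : ℝ) * M) :=
          Finset.sum_le_card_nsmul _ _ _ hterm
      _ = (n : ℝ) * M * ((n : ℝ) + 1) := by
          rw [Finset.card_range, nsmul_eq_mul]; push_cast; ring
  -- conclude
  rw [hPdiff, norm_mul]
  have hab : ‖a - b‖ ≤ M := hM _ _
  have hcast : ((n + 1 - 1 : ℕ) : ℝ) = (n : ℝ) := by simp
  rw [hcast]
  calc ‖a - b‖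
        * ‖(∑ i ∈ Finset.range (n + 1), a ^ i * b ^ (n - i)) / ((n : ℂ) + 1) - Q‖
      ≤ M * ((n : ℝ) * M) := by
        apply mul_le_mul hab hG (norm_nonneg _) hM0
    _ = (n : ℝ) * (M * M) := by ring
    _ ≤ (n : ℝ) * S := by
        apply mul_le_mul_of_nonneg_left hMS (Nat.cast_nonneg n)
end

section
/- Let k be a positive integer and let z_1, ..., z_k be complex numbers in the open unit disk 𝔻. Then |(z_1^k + ⋯ + z_k^k)/k − z_1 ⋯ z_k| ≤ (k−1)^2 · max_{i,j ∈ {1,...,k}} |z_i − z_j|^2. -/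
open Fin.NatCast

lemma abs_prod_sub_prod_le_s4 {ι : Type*} (s : Finset ι) (f g : ι → ℂ)
    (hf : ∀ i ∈ s, ‖f i‖ ≤ 1) (hg : ∀ i ∈ s, ‖g i‖ ≤ 1) :
    ‖∏ i ∈ s, f i - ∏ i ∈ s, g i‖ ≤ ∑ i ∈ s, ‖f i - g i‖ := by
  induction s using Finset.cons_induction with
  | empty => simp
  | cons a s ha ih =>
    rw [Finset.prod_cons, Finset.prod_cons, Finset.sum_cons]
    have h1 : f a * ∏ i ∈ s, f i - g a * ∏ i ∈ s, g i
        = (f a - g a) * ∏ i ∈ s, g i + f a * (∏ i ∈ s, f i - ∏ i ∈ s, g i) := by ring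
    rw [h1]
    have hgp : ‖∏ i ∈ s, g i‖ ≤ 1 := by
      rw [norm_prod]
      exact Finset.prod_le_one (fun i _ => norm_nonneg _)
        (fun i hi => hg i (Finset.mem_cons_of_mem hi))
    have hih := ih (fun i hi => hf i (Finset.mem_cons_of_mem hi))
      (fun i hi => hg i (Finset.mem_cons_of_mem hi))
    calc ‖(f a - g a) * ∏ i ∈ s, g i + f a * (∏ i ∈ s, f i - ∏ i ∈ s, g i)‖
        ≤ ‖(f a - g a) * ∏ i ∈ s, g i‖
          + ‖f a * (∏ i ∈ s, f i - ∏ i ∈ s, g i)‖ := norm_add_le _ _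
      _ ≤ ‖f a - g a‖ * 1 + 1 * (∑ i ∈ s, ‖f i - g i‖) := by
          rw [norm_mul, norm_mul]
          gcongr
          · exact hf a (Finset.mem_cons_self _ _)
      _ = ‖f a - g a‖ + ∑ i ∈ s, ‖f i - g i‖ := by ring

/-- If `z_1, …, z_k` lie in the open unit disk, then
`|(z_1^k + ⋯ + z_k^k)/k − z_1 ⋯ z_k| ≤ (k−1)² · max_{i,j} |z_i − z_j|²`. -/
theorem stmt_4 (k : ℕ) (hk : 0 < k) (z : Fin k → ℂ)
    (hz : ∀ j, ‖z j‖ < 1) :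
    ‖(∑ j, z j ^ k) / (k : ℂ) - ∏ j, z j‖ ≤
      ((k - 1 : ℕ) : ℝ) ^ 2 *
        Finset.univ.sup'
          (Finset.univ_nonempty_iff.mpr
            (nonempty_prod.mpr ⟨Fin.pos_iff_nonempty.mp hk, Fin.pos_iff_nonempty.mp hk⟩))
          (fun p : Fin k × Fin k => ‖z p.1 - z p.2‖ ^ 2) := by
  haveI : NeZero k := ⟨hk.ne'⟩
  have hne : (Finset.univ : Finset (Fin k × Fin k)).Nonempty :=
    Finset.univ_nonempty_iff.mpr
      (nonempty_prod.mpr ⟨Fin.pos_iff_nonempty.mp hk, Fin.pos_iff_nonempty.mp hk⟩)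
  set M := Finset.univ.sup' hne (fun p : Fin k × Fin k => ‖z p.1 - z p.2‖)
    with hMdef
  have hMle : ∀ i j : Fin k, ‖z i - z j‖ ≤ M := by
    intro i j
    exact Finset.le_sup' (f := fun p : Fin k × Fin k => ‖z p.1 - z p.2‖)
      (Finset.mem_univ (i, j))
  have hM0 : 0 ≤ M := le_trans (norm_nonneg _) (hMle ⟨0, hk⟩ ⟨0, hk⟩)
  have hz1 : ∀ j, ‖z j‖ ≤ 1 := fun j => (hz j).le
  have hM2 : M ^ 2 ≤ Finset.univ.sup' hne
      (fun p : Fin k × Fin k => ‖z p.1 - z p.2‖ ^ 2) := by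
    obtain ⟨p, _, hp⟩ := Finset.exists_mem_eq_sup' hne
      (fun p : Fin k × Fin k => ‖z p.1 - z p.2‖)
    have h1 : M = ‖z p.1 - z p.2‖ := hp
    rw [h1]
    exact Finset.le_sup'
      (f := fun p : Fin k × Fin k => ‖z p.1 - z p.2‖ ^ 2) (Finset.mem_univ p)
  -- the coefficients
  set c : Fin k → ℕ → ℂ := fun j t =>
    z j ^ (k - 1 - t) * ∏ s ∈ Finset.range t, z (j + ((s + 1 : ℕ) : Fin k)) with hc
  have c_eq : ∀ (j : Fin k) (t : ℕ), t ≤ k - 1 →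
      c j t = ∏ i ∈ Finset.range (k - 1), z (j + ((i + 1 - (k - 1 - t) : ℕ) : Fin k)) := by
    intro j t ht
    simp only [hc]
    generalize hA : k - 1 - t = a
    have h1 : k - 1 = a + t := by omega
    rw [h1, Finset.prod_range_add]
    congr 1
    · rw [Finset.prod_congr rfl (fun i hi => ?_), Finset.prod_const, Finset.card_range]
      rw [Finset.mem_range] at hi
      have h2 : i + 1 - a = 0 := by omega
      rw [h2, Nat.cast_zero, add_zero]
    · apply Finset.prod_congr rfl
      intro s _
      have h3 : a + s + 1 - a = s + 1 := by omega
      rw [h3]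
  have step : ∀ (j : Fin k) (t : ℕ), t < k - 1 →
      z j * c j (t + 1) = c j t * z (j + ((t + 1 : ℕ) : Fin k)) := by
    intro j t ht
    simp only [hc]
    rw [Finset.prod_range_succ]
    have h2 : k - 1 - t = (k - 1 - (t + 1)) + 1 := by omega
    rw [h2, pow_succ]
    ring
  set S : ℕ → ℂ := fun t => ∑ j, z j * c j t with hS
  have hS0 : S 0 = ∑ j, z j ^ k := by
    simp only [hS, hc]
    apply Finset.sum_congr rfl
    intro j _
    rw [Finset.range_zero, Finset.prod_empty, mul_one, Nat.sub_zero, ← pow_succ']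
    congr 1
    omega
  have hprodshift : ∀ j : Fin k, z j * c j (k - 1) = ∏ i, z i := by
    intro j
    simp only [hc, Nat.sub_self, pow_zero, one_mul]
    have h3 : ∏ i : Fin k, z i = ∏ s ∈ Finset.range k, z (j + (s : Fin k)) := by
      rw [← Fin.prod_univ_eq_prod_range (fun s : ℕ => z (j + (s : Fin k))) k]
      refine (Fintype.prod_equiv (Equiv.addLeft j) (fun i => z (j + ((i : ℕ) : Fin k))) z
        (fun i => ?_)).symm
      show z (j + ((i : ℕ) : Fin k)) = z (j + i)
      rw [Fin.cast_val_eq_self]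
    have h5 : ∏ s ∈ Finset.range k, z (j + (s : Fin k))
        = (∏ s ∈ Finset.range (k - 1), z (j + ((s + 1 : ℕ) : Fin k)))
          * z (j + ((0 : ℕ) : Fin k)) := by
      rw [show Finset.range k = Finset.range ((k - 1) + 1) by rw [Nat.sub_add_cancel hk]]
      exact Finset.prod_range_succ' _ _
    rw [h3, h5]
    simp [mul_comm]
  have hSk : S (k - 1) = (k : ℂ) * ∏ i, z i := by
    simp only [hS]
    rw [Finset.sum_congr rfl (fun j _ => hprodshift j), Finset.sum_const, Finset.card_univ,
      Fintype.card_fin, nsmul_eq_mul]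
  have hshift0 : ∀ d : Fin k, ∑ j, (z j - z (j + d)) = 0 := by
    intro d
    rw [Finset.sum_sub_distrib,
      Fintype.sum_equiv (Equiv.addRight d) (fun j => z (j + d)) z (fun j => rfl)]
    ring
  have hstepbound : ∀ t, t < k - 1 →
      ‖S t - S (t + 1)‖ ≤ (k : ℝ) * (((k - 1 : ℕ) : ℝ) * M * M) := by
    intro t ht
    set d : Fin k := ((t + 1 : ℕ) : Fin k) with hd
    have hts : S t - S (t + 1) = ∑ j, (c j t - c ⟨0, hk⟩ t) * (z j - z (j + d)) := by
      have h5 : S t - S (t + 1) = ∑ j, c j t * (z j - z (j + d)) := by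
        simp only [hS]
        rw [← Finset.sum_sub_distrib]
        apply Finset.sum_congr rfl
        intro j _
        rw [step j t ht]
        ring
      have h6 : ∑ j, (c j t - c ⟨0, hk⟩ t) * (z j - z (j + d))
          = (∑ j, c j t * (z j - z (j + d))) - c ⟨0, hk⟩ t * ∑ j, (z j - z (j + d)) := by
        rw [Finset.mul_sum, ← Finset.sum_sub_distrib]
        apply Finset.sum_congr rfl
        intro j _
        ring
      rw [h6, hshift0, mul_zero, sub_zero, h5]
    rw [hts]
    have hcdiff : ∀ j : Fin k, ‖c j t - c ⟨0, hk⟩ t‖ ≤ ((k - 1 : ℕ) : ℝ) * M := by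
      intro j
      rw [c_eq j t (by omega), c_eq ⟨0, hk⟩ t (by omega)]
      refine le_trans (abs_prod_sub_prod_le_s4 _ _ _ (fun i _ => hz1 _) (fun i _ => hz1 _)) ?_
      calc ∑ i ∈ Finset.range (k - 1),
            ‖z (j + ((i + 1 - (k - 1 - t) : ℕ) : Fin k))
              - z (⟨0, hk⟩ + ((i + 1 - (k - 1 - t) : ℕ) : Fin k))‖
          ≤ ∑ _i ∈ Finset.range (k - 1), M := Finset.sum_le_sum (fun i _ => hMle _ _)
        _ = ((k - 1 : ℕ) : ℝ) * M := by
            rw [Finset.sum_const, Finset.card_range, nsmul_eq_mul]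
    calc ‖∑ j, (c j t - c ⟨0, hk⟩ t) * (z j - z (j + d))‖
        ≤ ∑ j, ‖(c j t - c ⟨0, hk⟩ t) * (z j - z (j + d))‖ :=
          norm_sum_le _ _
      _ ≤ ∑ _j : Fin k, ((k - 1 : ℕ) : ℝ) * M * M := by
          apply Finset.sum_le_sum
          intro j _
          rw [norm_mul]
          exact mul_le_mul (hcdiff j) (hMle _ _) (norm_nonneg _)
            (by positivity)
      _ = (k : ℝ) * (((k - 1 : ℕ) : ℝ) * M * M) := by
          rw [Finset.sum_const, Finset.card_univ, Fintype.card_fin, nsmul_eq_mul]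
  have htel : S 0 - S (k - 1) = ∑ t ∈ Finset.range (k - 1), (S t - S (t + 1)) :=
    (Finset.sum_range_sub' S (k - 1)).symm
  have hD : ‖S 0 - S (k - 1)‖ ≤ ((k - 1 : ℕ) : ℝ) ^ 2 * M ^ 2 * k := by
    rw [htel]
    calc ‖∑ t ∈ Finset.range (k - 1), (S t - S (t + 1))‖
        ≤ ∑ t ∈ Finset.range (k - 1), ‖S t - S (t + 1)‖ :=
          norm_sum_le _ _
      _ ≤ ∑ _t ∈ Finset.range (k - 1), (k : ℝ) * (((k - 1 : ℕ) : ℝ) * M * M) :=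
          Finset.sum_le_sum (fun t ht => hstepbound t (Finset.mem_range.mp ht))
      _ = ((k - 1 : ℕ) : ℝ) ^ 2 * M ^ 2 * k := by
          rw [Finset.sum_const, Finset.card_range, nsmul_eq_mul]
          ring
  have hkC : (k : ℂ) ≠ 0 := Nat.cast_ne_zero.mpr hk.ne'
  have heq : (∑ j, z j ^ k) / (k : ℂ) - ∏ j, z j = (S 0 - S (k - 1)) / k := by
    rw [hS0, hSk]
    field_simp
  rw [heq, norm_div, Complex.norm_natCast, div_le_iff₀ (by exact_mod_cast hk)]
  calc ‖S 0 - S (k - 1)‖ ≤ ((k - 1 : ℕ) : ℝ) ^ 2 * M ^ 2 * k := hD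
    _ ≤ ((k - 1 : ℕ) : ℝ) ^ 2 * Finset.univ.sup'
          (Finset.univ_nonempty_iff.mpr
            (nonempty_prod.mpr ⟨Fin.pos_iff_nonempty.mp hk, Fin.pos_iff_nonempty.mp hk⟩))
          (fun p : Fin k × Fin k => ‖z p.1 - z p.2‖ ^ 2) * k := by
        gcongr
end

section
/- Let k, l be positive integers, let t = (t_1, ..., t_{2k}) be a tuple with each t_i ∈ {0, 1, ..., l}, and let α : ℕ → ℂ be a sequence with |α_n| < 1 for all n. For each n ∈ ℕ set β_n = ∏_{j=1}^{k} α_{n+t_{2j−1}} and β'_n = ∏_{j=1}^{k} α_{n+t_{2j}}. Then |β_n − β'_n|^2 ≤ k^2 · l · Σ_{q=0}^{l−1} |α_{n+q+1} − α_{n+q}|^2, and consequently |β_n|^2 + |β'_n|^2 − 2 Re(β_n · conj(β'_n)) ≤ k^2 · l · Σ_{q=0}^{l−1} |α_{n+q+1} − α_{n+q}|^2. -/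
lemma prod_diff_le (k : ℕ) (a b : ℕ → ℂ) (ha : ∀ i, ‖a i‖ ≤ 1)
    (hb : ∀ i, ‖b i‖ ≤ 1) :
    ‖(∏ j ∈ Finset.range k, a j) - ∏ j ∈ Finset.range k, b j‖ ≤
      ∑ j ∈ Finset.range k, ‖a j - b j‖ := by
  induction k with
  | zero => simp
  | succ k ih =>
    rw [Finset.prod_range_succ, Finset.prod_range_succ, Finset.sum_range_succ]
    have key : (∏ j ∈ Finset.range k, a j) * a k - (∏ j ∈ Finset.range k, b j) * b k
        = a k * ((∏ j ∈ Finset.range k, a j) - ∏ j ∈ Finset.range k, b j)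
          + (a k - b k) * ∏ j ∈ Finset.range k, b j := by ring
    rw [key]
    have h1 : ‖a k * ((∏ j ∈ Finset.range k, a j) - ∏ j ∈ Finset.range k, b j)‖
        ≤ ‖(∏ j ∈ Finset.range k, a j) - ∏ j ∈ Finset.range k, b j‖ := by
      rw [norm_mul]
      exact mul_le_of_le_one_left (by positivity) (ha k)
    have h2 : ‖(a k - b k) * ∏ j ∈ Finset.range k, b j‖
        ≤ ‖a k - b k‖ := by
      rw [norm_mul]
      refine mul_le_of_le_one_right (by positivity) ?_
      rw [norm_prod]
      exact Finset.prod_le_one (fun i _ => by positivity) (fun i _ => hb i)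
    calc _ ≤ _ := norm_add_le _ _
      _ ≤ _ := add_le_add (h1.trans ih) h2

lemma telescope_le (α : ℕ → ℂ) (n l a b : ℕ) (hab : a ≤ b) (hbl : b ≤ l) :
    ‖α (n + b) - α (n + a)‖ ≤
      ∑ q ∈ Finset.range l, ‖α (n + q + 1) - α (n + q)‖ := by
  have key : ∀ b, a ≤ b → ‖α (n + b) - α (n + a)‖ ≤
      ∑ q ∈ Finset.Ico a b, ‖α (n + q + 1) - α (n + q)‖ := by
    intro b hb
    induction b, hb using Nat.le_induction with
    | base => simp
    | succ b hb ih =>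
      rw [Finset.sum_Ico_succ_top hb]
      have : α (n + (b + 1)) - α (n + a) = (α (n + b + 1) - α (n + b)) + (α (n + b) - α (n + a)) := by
        rw [show n + (b + 1) = n + b + 1 by ring]; ring
      rw [this]
      calc _ ≤ _ := norm_add_le _ _
        _ ≤ _ := by rw [add_comm]; exact add_le_add ih le_rfl
  refine (key b hab).trans (Finset.sum_le_sum_of_subset_of_nonneg ?_ (fun _ _ _ => by positivity))
  intro x hx
  simp only [Finset.mem_Ico, Finset.mem_range] at *
  omega

/-- With `β_n = ∏_{j=1}^k α_{n+t_{2j−1}}` and `β'_n = ∏_{j=1}^k α_{n+t_{2j}}`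
(here `t (2*j)` is the 0-based version of `t_{2j+1}`), one has
`|β_n − β'_n|² ≤ k² l Σ_{q<l} |α_{n+q+1} − α_{n+q}|²` and the corresponding
estimate for `|β_n|² + |β'_n|² − 2 Re(β_n conj β'_n)`. -/
theorem stmt_6 (k l : ℕ) (hk : 0 < k) (hl : 0 < l) (t : ℕ → ℕ)
    (ht : ∀ i < 2 * k, t i ≤ l) (α : ℕ → ℂ) (hα : ∀ n, ‖α n‖ < 1)
    (n : ℕ) :
    ‖(∏ j ∈ Finset.range k, α (n + t (2 * j))) -
          ∏ j ∈ Finset.range k, α (n + t (2 * j + 1))‖ ^ 2 ≤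
        (k : ℝ) ^ 2 * l * ∑ q ∈ Finset.range l, ‖α (n + q + 1) - α (n + q)‖ ^ 2 ∧
      ‖∏ j ∈ Finset.range k, α (n + t (2 * j))‖ ^ 2 +
          ‖∏ j ∈ Finset.range k, α (n + t (2 * j + 1))‖ ^ 2 -
          2 * ((∏ j ∈ Finset.range k, α (n + t (2 * j))) *
            (starRingEnd ℂ) (∏ j ∈ Finset.range k, α (n + t (2 * j + 1)))).re ≤
        (k : ℝ) ^ 2 * l * ∑ q ∈ Finset.range l, ‖α (n + q + 1) - α (n + q)‖ ^ 2 := by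
  set β := ∏ j ∈ Finset.range k, α (n + t (2 * j)) with hβ
  set β' := ∏ j ∈ Finset.range k, α (n + t (2 * j + 1)) with hβ'
  set S := ∑ q ∈ Finset.range l, ‖α (n + q + 1) - α (n + q)‖ with hS
  have hterm : ∀ j < k, ‖α (n + t (2 * j)) - α (n + t (2 * j + 1))‖ ≤ S := by
    intro j hj
    have h1 : t (2 * j) ≤ l := ht _ (by omega)
    have h2 : t (2 * j + 1) ≤ l := ht _ (by omega)
    rcases le_total (t (2 * j + 1)) (t (2 * j)) with h | h
    · exact telescope_le α n l _ _ h h1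
    · rw [← norm_neg, neg_sub]
      exact telescope_le α n l _ _ h h2
  have hmain : ‖β - β'‖ ≤ k * S := by
    calc ‖β - β'‖
        ≤ ∑ j ∈ Finset.range k, ‖α (n + t (2 * j)) - α (n + t (2 * j + 1))‖ :=
          prod_diff_le k _ _ (fun i => (hα _).le) (fun i => (hα _).le)
      _ ≤ ∑ j ∈ Finset.range k, S := Finset.sum_le_sum (fun j hj =>
          hterm j (Finset.mem_range.mp hj))
      _ = k * S := by rw [Finset.sum_const, Finset.card_range, nsmul_eq_mul]
  have hfirst : ‖β - β'‖ ^ 2 ≤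
      (k : ℝ) ^ 2 * l * ∑ q ∈ Finset.range l, ‖α (n + q + 1) - α (n + q)‖ ^ 2 := by
    have hsq : ‖β - β'‖ ^ 2 ≤ ((k : ℝ) * S) ^ 2 := by
      apply pow_le_pow_left₀ (by positivity) hmain
    have hCS : S ^ 2 ≤ l * ∑ q ∈ Finset.range l, ‖α (n + q + 1) - α (n + q)‖ ^ 2 := by
      have := sq_sum_le_card_mul_sum_sq (s := Finset.range l)
        (f := fun q => ‖α (n + q + 1) - α (n + q)‖)
      simpa [Finset.card_range] using this
    calc ‖β - β'‖ ^ 2 ≤ ((k : ℝ) * S) ^ 2 := hsq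
      _ = (k : ℝ) ^ 2 * S ^ 2 := by ring
      _ ≤ (k : ℝ) ^ 2 * (l * ∑ q ∈ Finset.range l, ‖α (n + q + 1) - α (n + q)‖ ^ 2) :=
          mul_le_mul_of_nonneg_left hCS (by positivity)
      _ = _ := by ring
  refine ⟨hfirst, ?_⟩
  have heq : ‖β‖ ^ 2 + ‖β'‖ ^ 2 - 2 * (β * (starRingEnd ℂ) β').re
      = ‖β - β'‖ ^ 2 := by
    rw [Complex.sq_norm, Complex.sq_norm, Complex.sq_norm, Complex.normSq_sub]
  rw [heq]
  exact hfirst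
end

section
/- Let k, l be positive integers, let t = (t_1, ..., t_{2k}) be a tuple with each t_i ∈ {0, 1, ..., l}, and let α : ℕ → ℂ be a sequence with |α_n| < 1 for all n. For each n ∈ ℕ set β_n = ∏_{j=1}^{k} α_{n+t_{2j−1}}. Then | |β_n|^2 − (1/k) Σ_{j=1}^{k} |α_{n+t_{2j−1}}|^{2k} | ≤ 4 (k−1)^2 · l · Σ_{q=0}^{l−1} |α_{n+q+1} − α_{n+q}|^2. -/
open Finset

/-- Lower bound for a product of `m + δ j`. -/
lemma aux_prod_lb (m : ℝ) (hm : 0 ≤ m) (δ : ℕ → ℝ) (s : Finset ℕ)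
    (hδ : ∀ j ∈ s, 0 ≤ δ j) :
    m ^ s.card + m ^ (s.card - 1) * ∑ j ∈ s, δ j ≤ ∏ j ∈ s, (m + δ j) := by
  classical
  induction s using Finset.induction_on with
  | empty => simp
  | @insert a s ha ih =>
    have hδa : 0 ≤ δ a := hδ a (mem_insert_self a s)
    have hδs : ∀ j ∈ s, 0 ≤ δ j := fun j hj => hδ j (mem_insert_of_mem hj)
    have ih' := ih hδs
    rw [Finset.prod_insert ha, Finset.sum_insert ha, Finset.card_insert_of_notMem ha]
    rcases Finset.eq_empty_or_nonempty s with rfl | hs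
    · simp [mul_comm]
    · have hc : s.card - 1 + 1 = s.card := Nat.succ_pred_eq_of_pos (Finset.card_pos.2 hs)
      have hmul : m * m ^ (s.card - 1) = m ^ s.card := by
        rw [← pow_succ', hc]
      have hSg : 0 ≤ ∑ j ∈ s, δ j := Finset.sum_nonneg hδs
      have hma : 0 ≤ m + δ a := by linarith
      have hstep : (m + δ a) * (m ^ s.card + m ^ (s.card - 1) * ∑ j ∈ s, δ j) ≤
          (m + δ a) * ∏ j ∈ s, (m + δ j) := by
        exact mul_le_mul_of_nonneg_left ih' hma
      have hpow : (0:ℝ) ≤ m ^ (s.card - 1) := pow_nonneg hm _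
      have hpow2 : (0:ℝ) ≤ m ^ s.card := pow_nonneg hm _
      simp only [Nat.add_sub_cancel]
      have hms : m ^ (s.card + 1) = m * m ^ s.card := by ring
      have h3 : m * m ^ (s.card - 1) * ∑ j ∈ s, δ j = m ^ s.card * ∑ j ∈ s, δ j := by
        rw [hmul]
      have hexp : (m + δ a) * (m ^ s.card + m ^ (s.card - 1) * ∑ j ∈ s, δ j) =
          m * m ^ s.card + m * m ^ (s.card - 1) * ∑ j ∈ s, δ j + δ a * m ^ s.card +
            δ a * (m ^ (s.card - 1) * ∑ j ∈ s, δ j) := by ring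
      linarith [hstep, hexp, h3, hms, mul_nonneg hδa (mul_nonneg hpow hSg)]

/-- Second-order upper bound for `(m+δ)^k` when `m + δ ≤ 1`. -/
lemma aux_pow_ub (m δ : ℝ) (hm : 0 ≤ m) (hδ : 0 ≤ δ) (h1 : m + δ ≤ 1) :
    ∀ k : ℕ, (m + δ) ^ k ≤ m ^ k + k * m ^ (k - 1) * δ + ((k - 1 : ℕ) : ℝ) ^ 2 * δ ^ 2 := by
  intro k
  rcases Nat.eq_zero_or_pos k with rfl | hk
  · simp
  induction k, hk using Nat.le_induction with
  | base => simp
  | succ k hk ih =>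
    have hK : ((k - 1 : ℕ) : ℝ) = (k : ℝ) - 1 := by
      rw [Nat.cast_sub hk]; simp
    have hK' : ((k + 1 - 1 : ℕ) : ℝ) = (k : ℝ) := by simp
    have hm1 : m ≤ 1 := by linarith
    have hpm : m ^ (k - 1) ≤ 1 := pow_le_one₀ hm hm1
    have hpm0 : (0:ℝ) ≤ m ^ (k - 1) := pow_nonneg hm _
    have hc1 : k - 1 + 1 = k := by omega
    have hmul : m * m ^ (k - 1) = m ^ k := by
      rw [← pow_succ', hc1]
    have hmd : 0 ≤ m + δ := by linarith
    have hk1 : (1:ℝ) ≤ (k : ℝ) := by exact_mod_cast hk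
    have step : (m + δ) ^ (k + 1) = (m + δ) * (m + δ) ^ k := by ring
    have h2 : (m + δ) * (m + δ) ^ k ≤
        (m + δ) * (m ^ k + k * m ^ (k - 1) * δ + ((k - 1 : ℕ) : ℝ) ^ 2 * δ ^ 2) :=
      mul_le_mul_of_nonneg_left ih hmd
    rw [step, hK']
    rw [hK] at h2
    have hpk0 : (0:ℝ) ≤ m ^ k := pow_nonneg hm _
    have hpk1 : m ^ k ≤ 1 := pow_le_one₀ hm hm1
    have hδ2 : (0:ℝ) ≤ δ ^ 2 := sq_nonneg _
    have f1 : ((k:ℝ) - 1) ^ 2 * ((m + δ) * δ ^ 2) ≤ ((k:ℝ) - 1) ^ 2 * δ ^ 2 := by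
      apply mul_le_mul_of_nonneg_left _ (sq_nonneg _)
      nlinarith
    have f2 : (k:ℝ) * (m ^ (k - 1) * δ ^ 2) ≤ (k:ℝ) * δ ^ 2 := by
      apply mul_le_mul_of_nonneg_left _ (by linarith)
      nlinarith
    have hms : m ^ (k + 1) = m * m ^ k := by ring
    have expand : (m + δ) * (m ^ k + (k:ℝ) * m ^ (k - 1) * δ + ((k:ℝ) - 1) ^ 2 * δ ^ 2) =
        m * m ^ k + (k:ℝ) * (m * m ^ (k - 1)) * δ + δ * m ^ k +
          ((k:ℝ) - 1) ^ 2 * ((m + δ) * δ ^ 2) + (k:ℝ) * (m ^ (k - 1) * δ ^ 2) := by ring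
    have key : (m + δ) * (m ^ k + (k:ℝ) * m ^ (k - 1) * δ + ((k:ℝ) - 1) ^ 2 * δ ^ 2) ≤
        m ^ (k + 1) + ((k:ℝ) + 1) * m ^ k * δ + (k:ℝ) ^ 2 * δ ^ 2 := by
      rw [expand, hmul, hms]
      nlinarith [f1, f2, mul_nonneg (sub_nonneg.2 hk1) hδ2]
    have := le_trans h2 key
    simp only [Nat.add_sub_cancel]
    push_cast
    linarith

/-- Core estimate: `|(1/k) Σ z_j^k − ∏ z_j| ≤ (k−1)² B` for `z_j ∈ [0,1]` with pairwise
squared differences bounded by `B`. -/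
lemma core_est (k : ℕ) (hk : 0 < k) (z : ℕ → ℝ)
    (h0 : ∀ j ∈ range k, 0 ≤ z j) (h1 : ∀ j ∈ range k, z j ≤ 1) (B : ℝ)
    (hB : ∀ i ∈ range k, ∀ j ∈ range k, (z i - z j) ^ 2 ≤ B) :
    |(1 / (k : ℝ)) * ∑ j ∈ range k, z j ^ k - ∏ j ∈ range k, z j| ≤
      ((k - 1 : ℕ) : ℝ) ^ 2 * B := by
  have hne : (range k).Nonempty := nonempty_range_iff.2 hk.ne'
  have hkR : (0:ℝ) < k := by exact_mod_cast hk
  -- AM-GM lower bound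
  have hged : ∏ j ∈ range k, z j ≤ (1 / (k : ℝ)) * ∑ j ∈ range k, z j ^ k := by
    have := Real.geom_mean_le_arith_mean_weighted (range k) (fun _ => 1 / (k : ℝ))
      (fun j => z j ^ k) (fun i _ => by positivity)
      (by simp [Finset.sum_const, Finset.card_range]; field_simp)
      (fun i hi => pow_nonneg (h0 i hi) _)
    have heq : ∀ i ∈ range k, (z i ^ k) ^ ((1 : ℝ) / (k : ℝ)) = z i := by
      intro i hi
      rw [one_div, Real.pow_rpow_inv_natCast (h0 i hi) hk.ne']
    calc ∏ j ∈ range k, z j = ∏ j ∈ range k, (z j ^ k) ^ ((1:ℝ) / (k:ℝ)) :=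
          (Finset.prod_congr rfl heq).symm
      _ ≤ ∑ j ∈ range k, (1 / (k:ℝ)) * z j ^ k := this
      _ = (1 / (k : ℝ)) * ∑ j ∈ range k, z j ^ k := by rw [Finset.mul_sum]
  -- setup min
  obtain ⟨j0, hj0, hmin⟩ := Finset.exists_min_image (range k) z hne
  set m := z j0 with hm_def
  have hm0 : 0 ≤ m := h0 j0 hj0
  have hB0 : 0 ≤ B := le_trans (by positivity) (hB j0 hj0 j0 hj0)
  set δ : ℕ → ℝ := fun j => z j - m with hδ_def
  have hδ0 : ∀ j ∈ range k, 0 ≤ δ j := fun j hj => sub_nonneg.2 (hmin j hj)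
  have hδB : ∀ j ∈ range k, δ j ^ 2 ≤ B := fun j hj => hB j hj j0 hj0
  -- upper bound
  have hub : ∑ j ∈ range k, z j ^ k ≤
      (k : ℝ) * ∏ j ∈ range k, z j + (k : ℝ) * (((k - 1 : ℕ) : ℝ) ^ 2 * B) := by
    have hsum : ∑ j ∈ range k, z j ^ k ≤
        ∑ j ∈ range k, (m ^ k + k * m ^ (k - 1) * δ j + ((k - 1 : ℕ) : ℝ) ^ 2 * δ j ^ 2) := by
      apply Finset.sum_le_sum
      intro j hj
      have : z j = m + δ j := by simp [hδ_def]
      rw [this]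
      exact aux_pow_ub m (δ j) hm0 (hδ0 j hj) (by rw [← this]; exact h1 j hj) k
    have hprod : m ^ k + m ^ (k - 1) * ∑ j ∈ range k, δ j ≤ ∏ j ∈ range k, z j := by
      have := aux_prod_lb m hm0 δ (range k) hδ0
      rw [Finset.card_range] at this
      calc m ^ k + m ^ (k - 1) * ∑ j ∈ range k, δ j
          ≤ ∏ j ∈ range k, (m + δ j) := this
        _ = ∏ j ∈ range k, z j := Finset.prod_congr rfl (fun j _ => by simp [hδ_def])
    have hsum2 : ∑ j ∈ range k, (m ^ k + k * m ^ (k - 1) * δ j + ((k - 1 : ℕ) : ℝ) ^ 2 * δ j ^ 2)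
        = (k : ℝ) * m ^ k + (k : ℝ) * m ^ (k - 1) * ∑ j ∈ range k, δ j
          + ((k - 1 : ℕ) : ℝ) ^ 2 * ∑ j ∈ range k, δ j ^ 2 := by
      rw [Finset.sum_add_distrib, Finset.sum_add_distrib, Finset.sum_const, Finset.card_range,
        ← Finset.mul_sum, ← Finset.mul_sum]
      ring
    have hsq : ∑ j ∈ range k, δ j ^ 2 ≤ (k : ℝ) * B := by
      calc ∑ j ∈ range k, δ j ^ 2 ≤ ∑ _j ∈ range k, B := Finset.sum_le_sum hδB
        _ = (k : ℝ) * B := by rw [Finset.sum_const, Finset.card_range]; simp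
    have hKsq : (0:ℝ) ≤ ((k - 1 : ℕ) : ℝ) ^ 2 := sq_nonneg _
    nlinarith [mul_le_mul_of_nonneg_left hsq hKsq,
      mul_le_mul_of_nonneg_left hprod (le_of_lt hkR)]
  have habs : (1 / (k : ℝ)) * ∑ j ∈ range k, z j ^ k - ∏ j ∈ range k, z j ≤
      ((k - 1 : ℕ) : ℝ) ^ 2 * B := by
    rw [div_mul_eq_mul_div, one_mul, sub_le_iff_le_add, div_le_iff₀ hkR]
    nlinarith
  rw [abs_of_nonneg (sub_nonneg.2 hged)]
  exact habs

/-- Telescoping bound. -/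
lemma tele_bound (α : ℕ → ℂ) (n l u v : ℕ) (huv : u ≤ v) (hv : v ≤ l) :
    ‖α (n + v) - α (n + u)‖ ≤
      ∑ q ∈ range l, ‖α (n + q + 1) - α (n + q)‖ := by
  have htel : α (n + v) - α (n + u) =
      ∑ q ∈ Finset.Ico u v, (α (n + q + 1) - α (n + q)) := by
    rw [Finset.sum_Ico_eq_sub _ huv]
    have h2 : ∀ w : ℕ, ∑ q ∈ range w, (α (n + q + 1) - α (n + q)) = α (n + w) - α n := by
      intro w
      have := Finset.sum_range_sub (fun q => α (n + q)) w
      simpa [add_assoc] using this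
    rw [h2, h2]
    ring
  rw [htel]
  calc ‖∑ q ∈ Finset.Ico u v, (α (n + q + 1) - α (n + q))‖
      ≤ ∑ q ∈ Finset.Ico u v, ‖α (n + q + 1) - α (n + q)‖ :=
        norm_sum_le _ _
    _ ≤ ∑ q ∈ range l, ‖α (n + q + 1) - α (n + q)‖ := by
        apply Finset.sum_le_sum_of_subset_of_nonneg
        · intro x hx
          rw [Finset.mem_Ico] at hx
          exact Finset.mem_range.2 (lt_of_lt_of_le hx.2 hv)
        · intro x _ _; exact norm_nonneg _

/-- With `β_n = ∏_{j=1}^k α_{n+t_{2j−1}}` (here `t (2*j)` is the 0-based version of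
`t_{2j+1}`), one has
`| |β_n|² − (1/k) Σ_{j=1}^k |α_{n+t_{2j−1}}|^{2k} | ≤ 4(k−1)² l Σ_{q<l} |α_{n+q+1} − α_{n+q}|²`. -/
theorem stmt_7 (k l : ℕ) (hk : 0 < k) (hl : 0 < l) (t : ℕ → ℕ)
    (ht : ∀ i < 2 * k, t i ≤ l) (α : ℕ → ℂ) (hα : ∀ n, ‖α n‖ < 1)
    (n : ℕ) :
    |‖∏ j ∈ Finset.range k, α (n + t (2 * j))‖ ^ 2 -
        (1 / (k : ℝ)) * ∑ j ∈ Finset.range k, ‖α (n + t (2 * j))‖ ^ (2 * k)| ≤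
      4 * ((k - 1 : ℕ) : ℝ) ^ 2 * l *
        ∑ q ∈ Finset.range l, ‖α (n + q + 1) - α (n + q)‖ ^ 2 := by
  set z : ℕ → ℝ := fun j => ‖α (n + t (2 * j))‖ ^ 2 with hz_def
  set S : ℝ := ∑ q ∈ range l, ‖α (n + q + 1) - α (n + q)‖ ^ 2 with hS_def
  set T : ℝ := ∑ q ∈ range l, ‖α (n + q + 1) - α (n + q)‖ with hT_def
  have hT2 : T ^ 2 ≤ (l : ℝ) * S := by
    have := sq_sum_le_card_mul_sum_sq
      (s := range l) (f := fun q => ‖α (n + q + 1) - α (n + q)‖)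
    simpa [hT_def, hS_def] using this
  have hz0 : ∀ j ∈ range k, 0 ≤ z j := fun j _ => sq_nonneg _
  have hz1 : ∀ j ∈ range k, z j ≤ 1 := by
    intro j _
    have h := hα (n + t (2 * j))
    have h0 := norm_nonneg (α (n + t (2 * j)))
    show ‖α (n + t (2 * j))‖ ^ 2 ≤ 1
    nlinarith
  -- pairwise bound
  have hB : ∀ i ∈ range k, ∀ j ∈ range k, (z i - z j) ^ 2 ≤ 4 * ((l : ℝ) * S) := by
    intro i hi j hj
    set a := ‖α (n + t (2 * i))‖ with ha_def
    set b := ‖α (n + t (2 * j))‖ with hb_def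
    have ha0 : 0 ≤ a := norm_nonneg _
    have hb0 : 0 ≤ b := norm_nonneg _
    have ha1 : a < 1 := hα _
    have hb1 : b < 1 := hα _
    have hab : |a - b| ≤ ‖α (n + t (2 * i)) - α (n + t (2 * j))‖ :=
      abs_norm_sub_norm_le _ _
    have hdlt : ‖α (n + t (2 * i)) - α (n + t (2 * j))‖ ≤ T := by
      have hti : t (2 * i) ≤ l := ht (2 * i) (by rw [Finset.mem_range] at hi; omega)
      have htj : t (2 * j) ≤ l := ht (2 * j) (by rw [Finset.mem_range] at hj; omega)
      rcases le_total (t (2 * j)) (t (2 * i)) with hle | hle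
      · exact tele_bound α n l _ _ hle hti
      · have := tele_bound α n l _ _ hle htj
        rwa [norm_sub_rev] at this
      -- note: map_sub gives abs (x - y) = abs (y - x)
    have hT0 : 0 ≤ T := Finset.sum_nonneg fun q _ => norm_nonneg _
    have habT : |a - b| ≤ T := le_trans hab hdlt
    have hz_eq : z i - z j = (a + b) * (a - b) := by
      simp only [hz_def, ha_def, hb_def]; ring
    have h1 : |z i - z j| ≤ 2 * T := by
      rw [hz_eq, abs_mul]
      have h2 : |a + b| ≤ 2 := by rw [abs_of_nonneg (by linarith)]; linarith
      exact mul_le_mul h2 habT (abs_nonneg _) (by norm_num)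
    calc (z i - z j) ^ 2 = |z i - z j| ^ 2 := (sq_abs _).symm
      _ ≤ (2 * T) ^ 2 := by
          apply pow_le_pow_left₀ (abs_nonneg _) h1
      _ = 4 * T ^ 2 := by ring
      _ ≤ 4 * ((l : ℝ) * S) := by linarith
  have hcore := core_est k hk z hz0 hz1 (4 * ((l : ℝ) * S)) hB
  have hprod_eq : ‖∏ j ∈ range k, α (n + t (2 * j))‖ ^ 2 = ∏ j ∈ range k, z j := by
    rw [norm_prod, ← Finset.prod_pow]
  have hpow_eq : ∀ j ∈ range k, ‖α (n + t (2 * j))‖ ^ (2 * k) = z j ^ k := by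
    intro j _
    rw [hz_def, ← pow_mul]
  rw [hprod_eq, Finset.sum_congr rfl hpow_eq, abs_sub_comm]
  calc |(1 / (k : ℝ)) * ∑ j ∈ range k, z j ^ k - ∏ j ∈ range k, z j|
      ≤ ((k - 1 : ℕ) : ℝ) ^ 2 * (4 * ((l : ℝ) * S)) := hcore
    _ = 4 * ((k - 1 : ℕ) : ℝ) ^ 2 * l * S := by ring
end

section
/- Let k, l be positive integers and let t = (t_1, ..., t_{2k}) be a tuple with each t_i ∈ {0, 1, ..., l}. There exists a constant C, depending only on k and l, such that for every sequence α : ℕ → ℂ with |α_n| < 1 for all n and Σ_{n=0}^{∞} |α_{n+1} − α_n|^2 < ∞, one has Σ_{n=0}^{∞} | Re( ∏_{j=1}^{k} α_{n+t_{2j−1}} · conj(α_{n+t_{2j}}) ) − (1/(2k)) Σ_{i=1}^{2k} |α_{n+t_i}|^{2k} | ≤ C · Σ_{n=0}^{∞} |α_{n+1} − α_n|^2. -/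
set_option maxHeartbeats 1000000

open Finset

private lemma pairSum' {M : Type*} [AddCommMonoid M] (f : ℕ → M) (k : ℕ) :
    ∑ i ∈ range (2 * k), f i = ∑ j ∈ range k, (f (2 * j) + f (2 * j + 1)) := by
  induction k with
  | zero => simp
  | succ k ih =>
    have h2 : 2 * (k + 1) = (2 * k + 1) + 1 := by ring
    rw [h2, Finset.sum_range_succ, Finset.sum_range_succ, ih, Finset.sum_range_succ]
    ring_nf
    rw [add_assoc]

private lemma prodExpand (r : ℝ) (w : ℕ → ℂ) (hr : 0 ≤ r) (hr1 : r ≤ 1)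
    (hb : ∀ j, ‖(r : ℂ) + w j‖ ≤ 1) (k : ℕ) :
    ‖(∏ j ∈ range k, ((r : ℂ) + w j))
      - ((r : ℂ) ^ k + (r : ℂ) ^ (k - 1) * ∑ j ∈ range k, w j)‖
      ≤ (k : ℝ) ^ 2 * ∑ j ∈ range k, ‖w j‖ ^ 2 := by
  induction k with
  | zero => simp
  | succ k ih =>
    rcases Nat.eq_zero_or_pos k with hk | hk
    · subst hk
      simp
    obtain ⟨m, rfl⟩ : ∃ m, k = m + 1 := ⟨k - 1, (Nat.succ_pred_eq_of_pos hk).symm⟩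
    have key : (∏ j ∈ range (m + 1 + 1), ((r : ℂ) + w j))
        - ((r : ℂ) ^ (m + 1 + 1) + (r : ℂ) ^ (m + 1 + 1 - 1) * ∑ j ∈ range (m + 1 + 1), w j)
        = ((∏ j ∈ range (m + 1), ((r : ℂ) + w j))
            - ((r : ℂ) ^ (m + 1) + (r : ℂ) ^ (m + 1 - 1) * ∑ j ∈ range (m + 1), w j))
            * ((r : ℂ) + w (m + 1))
          + (r : ℂ) ^ m * ((∑ j ∈ range (m + 1), w j) * w (m + 1)) := by
      rw [Finset.prod_range_succ, Finset.sum_range_succ]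
      simp only [Nat.add_sub_cancel]
      ring
    rw [key]
    set Q := (∏ j ∈ range (m + 1), ((r : ℂ) + w j))
      - ((r : ℂ) ^ (m + 1) + (r : ℂ) ^ (m + 1 - 1) * ∑ j ∈ range (m + 1), w j) with hQ
    set T := ∑ j ∈ range (m + 1), w j with hT
    have habs : ‖Q * ((r : ℂ) + w (m + 1)) + (r : ℂ) ^ m * (T * w (m + 1))‖
        ≤ ‖Q‖ * ‖(r : ℂ) + w (m + 1)‖
          + ‖(r : ℂ)‖ ^ m * (‖T‖ * ‖w (m + 1)‖) := by
      calc _ ≤ ‖Q * ((r : ℂ) + w (m + 1))‖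
            + ‖(r : ℂ) ^ m * (T * w (m + 1))‖ := norm_add_le _ _
        _ = _ := by simp [map_mul, map_pow]
    refine habs.trans ?_
    have hQle : ‖Q‖ ≤ (m + 1 : ℝ) ^ 2 * ∑ j ∈ range (m + 1), ‖w j‖ ^ 2 := by
      simpa using ih
    have hrm : ‖(r : ℂ)‖ ^ m ≤ 1 := by
      apply pow_le_one₀ (norm_nonneg _)
      rwa [Complex.norm_real, Real.norm_eq_abs, abs_of_nonneg hr]
    have hTle : ‖T‖ ≤ ∑ j ∈ range (m + 1), ‖w j‖ :=
      norm_sum_le _ _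
    have hTc : ‖T‖ * ‖w (m + 1)‖
        ≤ ((∑ j ∈ range (m + 1), ‖w j‖ ^ 2)
            + (m + 1 : ℝ) * ‖w (m + 1)‖ ^ 2) / 2 := by
      have h1 : ‖T‖ * ‖w (m + 1)‖
          ≤ ∑ j ∈ range (m + 1), ‖w j‖ * ‖w (m + 1)‖ := by
        rw [← Finset.sum_mul]
        exact mul_le_mul_of_nonneg_right hTle (norm_nonneg _)
      refine h1.trans ?_
      have h2 : ∀ j ∈ range (m + 1), ‖w j‖ * ‖w (m + 1)‖
          ≤ (‖w j‖ ^ 2 + ‖w (m + 1)‖ ^ 2) / 2 := by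
        intro j _
        nlinarith [sq_nonneg (‖w j‖ - ‖w (m + 1)‖)]
      refine (Finset.sum_le_sum h2).trans_eq ?_
      rw [← Finset.sum_div, Finset.sum_add_distrib, Finset.sum_const, Finset.card_range,
        nsmul_eq_mul]
      push_cast
      ring
    have hS0 : 0 ≤ ∑ j ∈ range (m + 1), ‖w j‖ ^ 2 :=
      Finset.sum_nonneg fun j _ => sq_nonneg _
    have hc0 : 0 ≤ ‖w (m + 1)‖ ^ 2 := sq_nonneg _
    have hQ0 : 0 ≤ ‖Q‖ := norm_nonneg _
    have hb1 : ‖(r : ℂ) + w (m + 1)‖ ≤ 1 := hb (m + 1)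
    have hb0 : 0 ≤ ‖(r : ℂ) + w (m + 1)‖ := norm_nonneg _
    have hrm0 : 0 ≤ ‖(r : ℂ)‖ ^ m := pow_nonneg (norm_nonneg _) _
    have hTc0 : 0 ≤ ‖T‖ * ‖w (m + 1)‖ :=
      mul_nonneg (norm_nonneg _) (norm_nonneg _)
    rw [Finset.sum_range_succ]
    have hm0 : (0 : ℝ) ≤ (m : ℝ) := Nat.cast_nonneg m
    have e1 : ‖Q‖ * ‖(r : ℂ) + w (m + 1)‖ ≤ ‖Q‖ :=
      mul_le_of_le_one_right hQ0 hb1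
    have e2 : ‖(r : ℂ)‖ ^ m * (‖T‖ * ‖w (m + 1)‖)
        ≤ ‖T‖ * ‖w (m + 1)‖ := mul_le_of_le_one_left hTc0 hrm
    have hcast : ((m + 1 + 1 : ℕ) : ℝ) = (m : ℝ) + 2 := by push_cast; ring
    rw [hcast]
    nlinarith [mul_nonneg hm0 hS0, mul_nonneg hm0 hc0]

private lemma powExpand (r u : ℝ) (hr : 0 ≤ r) (hr1 : r ≤ 1) (h0 : 0 ≤ r + u)
    (h1 : r + u ≤ 1) (k : ℕ) :
    |(r + u) ^ k - (r ^ k + (k : ℝ) * r ^ (k - 1) * u)| ≤ (k : ℝ) ^ 2 * u ^ 2 := by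
  induction k with
  | zero => simp
  | succ k ih =>
    rcases Nat.eq_zero_or_pos k with hk | hk
    · subst hk
      simp
      positivity
    obtain ⟨m, rfl⟩ : ∃ m, k = m + 1 := ⟨k - 1, (Nat.succ_pred_eq_of_pos hk).symm⟩
    have key : (r + u) ^ (m + 1 + 1) - (r ^ (m + 1 + 1) + ((m : ℝ) + 1 + 1) * r ^ (m + 1 + 1 - 1) * u)
        = ((r + u) ^ (m + 1) - (r ^ (m + 1) + ((m : ℝ) + 1) * r ^ (m + 1 - 1) * u)) * (r + u)
          + ((m : ℝ) + 1) * r ^ m * u ^ 2 := by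
      simp only [Nat.add_sub_cancel]
      ring
    have key2 : ((m : ℝ) + 1 + 1) = ((m + 1 + 1 : ℕ) : ℝ) := by push_cast; ring
    rw [← key2] at *
    rw [key]
    have h2 : |((r + u) ^ (m + 1) - (r ^ (m + 1) + ((m : ℝ) + 1) * r ^ (m + 1 - 1) * u)) * (r + u)
          + ((m : ℝ) + 1) * r ^ m * u ^ 2|
        ≤ |(r + u) ^ (m + 1) - (r ^ (m + 1) + ((m : ℝ) + 1) * r ^ (m + 1 - 1) * u)| * |r + u|
          + ((m : ℝ) + 1) * r ^ m * u ^ 2 := by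
      refine (abs_add_le _ _).trans ?_
      rw [abs_mul]
      gcongr
      exact le_of_eq (abs_of_nonneg (by positivity))
    refine h2.trans ?_
    have ih' : |(r + u) ^ (m + 1) - (r ^ (m + 1) + ((m : ℝ) + 1) * r ^ (m + 1 - 1) * u)|
        ≤ ((m : ℝ) + 1) ^ 2 * u ^ 2 := by
      have := ih
      push_cast at this ⊢
      convert this using 3
    have hru : |r + u| ≤ 1 := abs_le.2 ⟨by linarith, h1⟩
    have hrm : r ^ m ≤ 1 := pow_le_one₀ hr hr1
    have habs0 : 0 ≤ |(r + u) ^ (m + 1) - (r ^ (m + 1) + ((m : ℝ) + 1) * r ^ (m + 1 - 1) * u)| :=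
      abs_nonneg _
    have hm0 : (0 : ℝ) ≤ (m : ℝ) := Nat.cast_nonneg m
    have hu2 : 0 ≤ u ^ 2 := sq_nonneg u
    simp only [Nat.add_sub_cancel] at h2 ih' habs0 ⊢
    push_cast at h2 ih' habs0 ⊢
    nlinarith [mul_le_of_le_one_right habs0 hru, mul_nonneg hm0 hu2,
      mul_le_of_le_one_right (mul_nonneg (by linarith : (0:ℝ) ≤ (m:ℝ)+1) hu2) hrm]

private lemma keyPointwise (k : ℕ) (hk : 0 < k) (b : ℂ) (a : ℕ → ℂ)
    (hb : ‖b‖ ≤ 1) (ha : ∀ i, ‖a i‖ ≤ 1) :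
    |(∏ j ∈ range k, a (2 * j) * (starRingEnd ℂ) (a (2 * j + 1))).re
      - (1 / (2 * (k : ℝ))) * ∑ i ∈ range (2 * k), ‖a i‖ ^ (2 * k)|
      ≤ 27 * (k : ℝ) ^ 2 * ∑ i ∈ range (2 * k), ‖a i - b‖ ^ 2 := by
  have hk1 : (1 : ℝ) ≤ (k : ℝ) := by exact_mod_cast hk
  have hk0 : (k : ℝ) ≠ 0 := by positivity
  set r : ℝ := ‖b‖ ^ 2 with hr_def
  have hr0 : 0 ≤ r := sq_nonneg _
  have hr1 : r ≤ 1 := pow_le_one₀ (norm_nonneg _) hb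
  have hrc : (r : ℂ) = b * (starRingEnd ℂ) b := by
    rw [hr_def, Complex.sq_norm, Complex.mul_conj]
  set ε : ℕ → ℂ := fun i => a i - b with hε_def
  set w : ℕ → ℂ := fun j => a (2 * j) * (starRingEnd ℂ) (a (2 * j + 1)) - (r : ℂ) with hw_def
  set u : ℕ → ℝ := fun i => ‖a i‖ ^ 2 - r with hu_def
  have hεle : ∀ i, ‖ε i‖ ≤ 2 := by
    intro i
    calc ‖a i - b‖ ≤ ‖a i‖ + ‖b‖ := by
          simpa [sub_eq_add_neg] using norm_add_le (a i) (-b)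
      _ ≤ 2 := by linarith [ha i]
  -- basic identities
  have hw1 : ∀ j, (r : ℂ) + w j = a (2 * j) * (starRingEnd ℂ) (a (2 * j + 1)) := by
    intro j; simp [hw_def]
  have habsw : ∀ j, ‖(r : ℂ) + w j‖ ≤ 1 := by
    intro j
    rw [hw1 j, norm_mul, Complex.norm_conj]
    exact mul_le_one₀ (ha _) (norm_nonneg _) (ha _)
  have hu1 : ∀ i, r + u i = ‖a i‖ ^ 2 := by intro i; simp [hu_def]
  have hu0 : ∀ i, 0 ≤ r + u i := by intro i; rw [hu1]; positivity
  have hu1' : ∀ i, r + u i ≤ 1 := by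
    intro i; rw [hu1]; exact pow_le_one₀ (norm_nonneg _) (ha i)
  -- error terms
  set E1 : ℂ := (∏ j ∈ range k, ((r : ℂ) + w j))
    - ((r : ℂ) ^ k + (r : ℂ) ^ (k - 1) * ∑ j ∈ range k, w j) with hE1_def
  have hE1 : ‖E1‖ ≤ (k : ℝ) ^ 2 * ∑ j ∈ range k, ‖w j‖ ^ 2 :=
    prodExpand r w hr0 hr1 habsw k
  set E2 : ℕ → ℝ := fun i => (r + u i) ^ k - (r ^ k + (k : ℝ) * r ^ (k - 1) * u i) with hE2_def
  have hE2 : ∀ i, |E2 i| ≤ (k : ℝ) ^ 2 * (u i) ^ 2 := fun i =>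
    powExpand r (u i) hr0 hr1 (hu0 i) (hu1' i) k
  -- product real part
  have hprod : (∏ j ∈ range k, a (2 * j) * (starRingEnd ℂ) (a (2 * j + 1))).re
      = r ^ k + r ^ (k - 1) * ∑ j ∈ range k, (w j).re + E1.re := by
    have h1 : ∏ j ∈ range k, a (2 * j) * (starRingEnd ℂ) (a (2 * j + 1))
        = (r : ℂ) ^ k + (r : ℂ) ^ (k - 1) * (∑ j ∈ range k, w j) + E1 := by
      rw [← Finset.prod_congr rfl fun j _ => hw1 j]
      rw [hE1_def]; ring
    rw [h1]
    simp only [Complex.add_re]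
    congr 1
    congr 1
    · norm_cast
    · rw [← Complex.ofReal_pow, Complex.re_ofReal_mul, Complex.re_sum]
  -- power sum
  have hpow : ∀ i, ‖a i‖ ^ (2 * k) = r ^ k + (k : ℝ) * r ^ (k - 1) * u i + E2 i := by
    intro i
    rw [pow_mul, ← hu1 i, hE2_def]; ring
  have hsum_pow : ∑ i ∈ range (2 * k), ‖a i‖ ^ (2 * k)
      = 2 * (k : ℝ) * r ^ k + (k : ℝ) * r ^ (k - 1) * (∑ i ∈ range (2 * k), u i)
        + ∑ i ∈ range (2 * k), E2 i := by
    rw [Finset.sum_congr rfl fun i _ => hpow i, Finset.sum_add_distrib, Finset.sum_add_distrib,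
      Finset.sum_const, Finset.card_range, ← Finset.mul_sum, nsmul_eq_mul]
    push_cast; ring
  -- cancellation structure
  have hswap : ∀ z : ℂ, (b * (starRingEnd ℂ) z).re = (z * (starRingEnd ℂ) b).re := by
    intro z
    simp [Complex.mul_re, Complex.conj_re, Complex.conj_im]
    ring
  have hwj : ∀ j, w j = ε (2 * j) * (starRingEnd ℂ) b + b * (starRingEnd ℂ) (ε (2 * j + 1))
      + ε (2 * j) * (starRingEnd ℂ) (ε (2 * j + 1)) := by
    intro j
    simp only [hw_def, hε_def, hrc, map_sub]
    ring
  have hwre : ∀ j, (w j).re = (ε (2 * j) * (starRingEnd ℂ) b).re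
      + (ε (2 * j + 1) * (starRingEnd ℂ) b).re
      + (ε (2 * j) * (starRingEnd ℂ) (ε (2 * j + 1))).re := by
    intro j
    rw [hwj j]
    simp only [Complex.add_re, hswap]
  have hui : ∀ i, u i = 2 * (ε i * (starRingEnd ℂ) b).re + ‖ε i‖ ^ 2 := by
    intro i
    have hai : a i = b + ε i := by simp [hε_def]
    rw [hu_def]
    simp only
    rw [hai, Complex.sq_norm, Complex.normSq_add, hr_def, Complex.sq_norm, Complex.sq_norm,
      hswap]
    try ring
  have hcancel : ∑ j ∈ range k, (w j).re - (1 / 2) * ∑ i ∈ range (2 * k), u i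
      = ∑ j ∈ range k, (ε (2 * j) * (starRingEnd ℂ) (ε (2 * j + 1))).re
        - (1 / 2) * ∑ i ∈ range (2 * k), ‖ε i‖ ^ 2 := by
    have h1 : ∑ j ∈ range k, (w j).re
        = ∑ j ∈ range k, ((ε (2 * j) * (starRingEnd ℂ) b).re
            + (ε (2 * j + 1) * (starRingEnd ℂ) b).re)
          + ∑ j ∈ range k, (ε (2 * j) * (starRingEnd ℂ) (ε (2 * j + 1))).re := by
      rw [← Finset.sum_add_distrib]
      exact Finset.sum_congr rfl fun j _ => by rw [hwre j]
    have h2 : ∑ i ∈ range (2 * k), u i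
        = 2 * ∑ i ∈ range (2 * k), (ε i * (starRingEnd ℂ) b).re
          + ∑ i ∈ range (2 * k), ‖ε i‖ ^ 2 := by
      rw [Finset.sum_congr rfl fun i _ => hui i, Finset.sum_add_distrib, ← Finset.mul_sum]
    have h3 : ∑ i ∈ range (2 * k), (ε i * (starRingEnd ℂ) b).re
        = ∑ j ∈ range k, ((ε (2 * j) * (starRingEnd ℂ) b).re
            + (ε (2 * j + 1) * (starRingEnd ℂ) b).re) :=
      pairSum' _ k
    rw [h1, h2, h3]
    ring
  -- main decomposition
  set Sε : ℝ := ∑ i ∈ range (2 * k), ‖ε i‖ ^ 2 with hSε_def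
  have hSε0 : 0 ≤ Sε := Finset.sum_nonneg fun i _ => sq_nonneg _
  set X : ℝ := ∑ j ∈ range k, (ε (2 * j) * (starRingEnd ℂ) (ε (2 * j + 1))).re
    - (1 / 2) * Sε with hX_def
  have hmain : (∏ j ∈ range k, a (2 * j) * (starRingEnd ℂ) (a (2 * j + 1))).re
      - (1 / (2 * (k : ℝ))) * ∑ i ∈ range (2 * k), ‖a i‖ ^ (2 * k)
      = r ^ (k - 1) * X + E1.re - (1 / (2 * (k : ℝ))) * ∑ i ∈ range (2 * k), E2 i := by
    rw [hprod, hsum_pow, ← hcancel]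
    field_simp
    ring
  rw [hmain]
  clear_value X Sε E2 E1 u w ε r
  -- bounds
  have hXle : |X| ≤ Sε := by
    have h1 : |∑ j ∈ range k, (ε (2 * j) * (starRingEnd ℂ) (ε (2 * j + 1))).re|
        ≤ ∑ j ∈ range k, (‖ε (2 * j)‖ ^ 2 + ‖ε (2 * j + 1)‖ ^ 2) / 2 := by
      refine (Finset.abs_sum_le_sum_abs _ _).trans (Finset.sum_le_sum fun j _ => ?_)
      have h := Complex.abs_re_le_norm (ε (2 * j) * (starRingEnd ℂ) (ε (2 * j + 1)))
      rw [norm_mul, Complex.norm_conj] at h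
      nlinarith [sq_nonneg (‖ε (2 * j)‖ - ‖ε (2 * j + 1)‖),
        norm_nonneg (ε (2 * j)), norm_nonneg (ε (2 * j + 1))]
    have h2 : ∑ j ∈ range k, (‖ε (2 * j)‖ ^ 2 + ‖ε (2 * j + 1)‖ ^ 2) / 2
        = Sε / 2 := by
      rw [← Finset.sum_div, hSε_def, pairSum' (fun i => ‖ε i‖ ^ 2) k]
    rw [hX_def]
    calc |∑ j ∈ range k, (ε (2 * j) * (starRingEnd ℂ) (ε (2 * j + 1))).re - 1 / 2 * Sε|
        ≤ |∑ j ∈ range k, (ε (2 * j) * (starRingEnd ℂ) (ε (2 * j + 1))).re| + |1 / 2 * Sε| :=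
          abs_sub _ _
      _ ≤ Sε / 2 + Sε / 2 := by
          have h3 := h1.trans_eq h2
          rw [abs_mul, abs_of_nonneg hSε0]
          have h4 : |(1:ℝ)/2| = 1/2 := by norm_num
          rw [h4]
          linarith
      _ = Sε := by ring
  have hwle : ∑ j ∈ range k, ‖w j‖ ^ 2 ≤ 18 * Sε := by
    have h1 : ∀ j ∈ range k, ‖w j‖ ^ 2
        ≤ 18 * (‖ε (2 * j)‖ ^ 2 + ‖ε (2 * j + 1)‖ ^ 2) := by
      intro j _
      have habs : ‖w j‖
          ≤ 3 * ‖ε (2 * j)‖ + ‖ε (2 * j + 1)‖ := by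
        rw [hwj j]
        have t1 : ‖ε (2 * j) * (starRingEnd ℂ) b‖ ≤ ‖ε (2 * j)‖ := by
          rw [norm_mul, Complex.norm_conj]
          exact mul_le_of_le_one_right (norm_nonneg _) hb
        have t2 : ‖b * (starRingEnd ℂ) (ε (2 * j + 1))‖
            ≤ ‖ε (2 * j + 1)‖ := by
          rw [norm_mul, Complex.norm_conj]
          exact mul_le_of_le_one_left (norm_nonneg _) hb
        have t3 : ‖ε (2 * j) * (starRingEnd ℂ) (ε (2 * j + 1))‖
            ≤ 2 * ‖ε (2 * j)‖ := by
          rw [norm_mul, Complex.norm_conj]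
          nlinarith [norm_nonneg (ε (2 * j)), hεle (2 * j + 1)]
        calc ‖ε (2 * j) * (starRingEnd ℂ) b + b * (starRingEnd ℂ) (ε (2 * j + 1))
              + ε (2 * j) * (starRingEnd ℂ) (ε (2 * j + 1))‖
            ≤ ‖ε (2 * j) * (starRingEnd ℂ) b + b * (starRingEnd ℂ) (ε (2 * j + 1))‖
              + ‖ε (2 * j) * (starRingEnd ℂ) (ε (2 * j + 1))‖ := norm_add_le _ _
          _ ≤ ‖ε (2 * j) * (starRingEnd ℂ) b‖
              + ‖b * (starRingEnd ℂ) (ε (2 * j + 1))‖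
              + ‖ε (2 * j) * (starRingEnd ℂ) (ε (2 * j + 1))‖ := by
              have := norm_add_le (ε (2 * j) * (starRingEnd ℂ) b)
                (b * (starRingEnd ℂ) (ε (2 * j + 1)))
              linarith
          _ ≤ 3 * ‖ε (2 * j)‖ + ‖ε (2 * j + 1)‖ := by linarith
      have hsq : ‖w j‖ ^ 2
          ≤ (3 * ‖ε (2 * j)‖ + ‖ε (2 * j + 1)‖) ^ 2 := by
        have h0 : (0:ℝ) ≤ ‖w j‖ := norm_nonneg _
        nlinarith
      refine hsq.trans ?_
      nlinarith [sq_nonneg (3 * ‖ε (2 * j)‖ - ‖ε (2 * j + 1)‖)]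
    calc ∑ j ∈ range k, ‖w j‖ ^ 2
        ≤ ∑ j ∈ range k, 18 * (‖ε (2 * j)‖ ^ 2 + ‖ε (2 * j + 1)‖ ^ 2) :=
          Finset.sum_le_sum h1
      _ = 18 * Sε := by
          rw [← Finset.mul_sum, hSε_def, pairSum' (fun i => ‖ε i‖ ^ 2) k]
  have hE2sum : |∑ i ∈ range (2 * k), E2 i| ≤ 16 * (k : ℝ) ^ 2 * Sε := by
    have h1 : ∀ i ∈ range (2 * k), |E2 i| ≤ (k : ℝ) ^ 2 * (16 * ‖ε i‖ ^ 2) := by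
      intro i _
      refine (hE2 i).trans ?_
      have hub : |u i| ≤ 4 * ‖ε i‖ := by
        rw [hui i]
        have t1 : |(ε i * (starRingEnd ℂ) b).re| ≤ ‖ε i‖ := by
          have h := Complex.abs_re_le_norm (ε i * (starRingEnd ℂ) b)
          rw [norm_mul, Complex.norm_conj] at h
          refine h.trans ?_
          exact mul_le_of_le_one_right (norm_nonneg _) hb
        have t2 : ‖ε i‖ ^ 2 ≤ 2 * ‖ε i‖ := by
          nlinarith [hεle i, norm_nonneg (ε i)]
        have e1 : |2 * (ε i * (starRingEnd ℂ) b).re| = 2 * |(ε i * (starRingEnd ℂ) b).re| := by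
          rw [abs_mul]; norm_num
        have e2 : |‖ε i‖ ^ 2| = ‖ε i‖ ^ 2 := abs_of_nonneg (sq_nonneg _)
        calc |2 * (ε i * (starRingEnd ℂ) b).re + ‖ε i‖ ^ 2|
            ≤ |2 * (ε i * (starRingEnd ℂ) b).re| + |‖ε i‖ ^ 2| := abs_add_le _ _
          _ = 2 * |(ε i * (starRingEnd ℂ) b).re| + ‖ε i‖ ^ 2 := by rw [e1, e2]
          _ ≤ 4 * ‖ε i‖ := by linarith
      have hk2 : (0 : ℝ) ≤ (k : ℝ) ^ 2 := sq_nonneg _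
      have : u i ^ 2 ≤ 16 * ‖ε i‖ ^ 2 := by
        have h5 : |u i| * |u i| ≤ (4 * ‖ε i‖) * (4 * ‖ε i‖) :=
          mul_le_mul hub hub (abs_nonneg _) (by positivity)
        nlinarith [sq_abs (u i)]
      nlinarith
    calc |∑ i ∈ range (2 * k), E2 i| ≤ ∑ i ∈ range (2 * k), |E2 i| :=
        Finset.abs_sum_le_sum_abs _ _
      _ ≤ ∑ i ∈ range (2 * k), (k : ℝ) ^ 2 * (16 * ‖ε i‖ ^ 2) :=
        Finset.sum_le_sum h1
      _ = 16 * (k : ℝ) ^ 2 * Sε := by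
        rw [hSε_def, Finset.mul_sum]
        exact Finset.sum_congr rfl fun i _ => by ring
  -- assemble
  have hrk1 : r ^ (k - 1) ≤ 1 := pow_le_one₀ hr0 hr1
  have hrk0 : 0 ≤ r ^ (k - 1) := pow_nonneg hr0 _
  have hE1re : |E1.re| ≤ (k : ℝ) ^ 2 * (18 * Sε) := by
    refine (Complex.abs_re_le_norm E1).trans (hE1.trans ?_)
    have hk2 : (0 : ℝ) ≤ (k : ℝ) ^ 2 := sq_nonneg _
    nlinarith
  have hc0 : (0 : ℝ) < 1 / (2 * (k : ℝ)) := by positivity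
  calc |r ^ (k - 1) * X + E1.re - 1 / (2 * (k : ℝ)) * ∑ i ∈ range (2 * k), E2 i|
      ≤ |r ^ (k - 1) * X| + |E1.re| + |1 / (2 * (k : ℝ)) * ∑ i ∈ range (2 * k), E2 i| := by
        refine (abs_sub _ _).trans ?_
        gcongr
        exact abs_add_le _ _
    _ ≤ Sε + (k : ℝ) ^ 2 * (18 * Sε) + 1 / (2 * (k : ℝ)) * (16 * (k : ℝ) ^ 2 * Sε) := by
        refine add_le_add (add_le_add ?_ hE1re) ?_
        · rw [abs_mul, abs_of_nonneg hrk0]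
          calc r ^ (k - 1) * |X| ≤ 1 * |X| := by gcongr
            _ ≤ Sε := by rw [one_mul]; exact hXle
        · rw [abs_mul, abs_of_nonneg hc0.le]
          exact mul_le_mul_of_nonneg_left hE2sum hc0.le
    _ ≤ 27 * (k : ℝ) ^ 2 * Sε := by
        have h8 : 1 / (2 * (k : ℝ)) * (16 * (k : ℝ) ^ 2 * Sε) = 8 * (k : ℝ) * Sε := by
          field_simp; ring
        rw [h8]
        nlinarith [mul_nonneg (mul_nonneg (by linarith : (0:ℝ) ≤ (k:ℝ)) hSε0)
          (by linarith : (0:ℝ) ≤ (k:ℝ) - 1), hSε0]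

private lemma distLem (α : ℕ → ℂ) (n τ l : ℕ) (hτ : τ ≤ l) :
    ‖α (n + τ) - α n‖ ^ 2
      ≤ (l : ℝ) * ∑ m ∈ range l, ‖α (n + m + 1) - α (n + m)‖ ^ 2 := by
  have htel : α (n + τ) - α n = ∑ m ∈ range τ, (α (n + m + 1) - α (n + m)) := by
    have h := Finset.sum_range_sub (fun m => α (n + m)) τ
    simp only [← add_assoc] at h
    exact h.symm
  have h1 : ‖α (n + τ) - α n‖
      ≤ ∑ m ∈ range τ, ‖α (n + m + 1) - α (n + m)‖ := by
    rw [htel]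
    exact norm_sum_le _ _
  have h2 : ∑ m ∈ range τ, ‖α (n + m + 1) - α (n + m)‖
      ≤ ∑ m ∈ range l, ‖α (n + m + 1) - α (n + m)‖ :=
    Finset.sum_le_sum_of_subset_of_nonneg (Finset.range_subset_range.2 hτ)
      (fun m _ _ => norm_nonneg _)
  have h3 : ‖α (n + τ) - α n‖ ^ 2
      ≤ (∑ m ∈ range l, ‖α (n + m + 1) - α (n + m)‖) ^ 2 := by
    have h0 : (0:ℝ) ≤ ‖α (n + τ) - α n‖ := norm_nonneg _
    nlinarith [h1.trans h2]
  refine h3.trans ?_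
  have h4 := sq_sum_le_card_mul_sum_sq
    (s := range l) (f := fun m => ‖α (n + m + 1) - α (n + m)‖)
  simpa [Finset.card_range] using h4

/-- There is a constant `C = C(k, l)` such that for every sequence `α` in the unit disk
with square-summable forward differences,
`Σ_n | Re(∏_{j=1}^k α_{n+t_{2j−1}} conj(α_{n+t_{2j}})) − (1/(2k)) Σ_{i=1}^{2k} |α_{n+t_i}|^{2k} |
  ≤ C Σ_n |α_{n+1} − α_n|²`.
(Here `t (2*j)`, `t (2*j+1)` are the 0-based versions of `t_{2j+1}`, `t_{2j+2}`.) -/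
theorem stmt_8 (k l : ℕ) (hk : 0 < k) (hl : 0 < l) (t : ℕ → ℕ)
    (ht : ∀ i < 2 * k, t i ≤ l) :
    ∃ C : ℝ, ∀ α : ℕ → ℂ, (∀ n, ‖α n‖ < 1) →
      Summable (fun n => ‖α (n + 1) - α n‖ ^ 2) →
      Summable (fun n =>
          |((∏ j ∈ Finset.range k,
                α (n + t (2 * j)) * (starRingEnd ℂ) (α (n + t (2 * j + 1)))).re -
            (1 / (2 * (k : ℝ))) *
              ∑ i ∈ Finset.range (2 * k), ‖α (n + t i)‖ ^ (2 * k))|) ∧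
        (∑' n : ℕ,
          |((∏ j ∈ Finset.range k,
                α (n + t (2 * j)) * (starRingEnd ℂ) (α (n + t (2 * j + 1)))).re -
            (1 / (2 * (k : ℝ))) *
              ∑ i ∈ Finset.range (2 * k), ‖α (n + t i)‖ ^ (2 * k))|) ≤
          C * ∑' n : ℕ, ‖α (n + 1) - α n‖ ^ 2 := by
  refine ⟨27 * (k : ℝ) ^ 2 * (2 * (k : ℝ) * (l : ℝ)) * (l : ℝ), ?_⟩
  intro α hα hsum
  set F : ℕ → ℝ := fun n =>
    |((∏ j ∈ Finset.range k,
          α (n + t (2 * j)) * (starRingEnd ℂ) (α (n + t (2 * j + 1)))).re -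
      (1 / (2 * (k : ℝ))) *
        ∑ i ∈ Finset.range (2 * k), ‖α (n + t i)‖ ^ (2 * k))| with hF_def
  set K : ℝ := 27 * (k : ℝ) ^ 2 * (2 * (k : ℝ) * (l : ℝ)) with hK_def
  have hK0 : 0 ≤ K := by rw [hK_def]; positivity
  set g : ℕ → ℝ := fun n =>
    ∑ m ∈ range l, ‖α (n + m + 1) - α (n + m)‖ ^ 2 with hg_def
  have hgsm : ∀ m : ℕ, Summable (fun n => ‖α (n + m + 1) - α (n + m)‖ ^ 2) := by
    intro m
    have h := (summable_nat_add_iff (f := fun n => ‖α (n + 1) - α n‖ ^ 2) m).2 hsum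
    simpa [add_right_comm, add_assoc] using h
  have hgsum : Summable g := summable_sum fun m _ => hgsm m
  have key : ∀ n, F n ≤ K * g n := by
    intro n
    have h1 := keyPointwise k hk (α n) (fun i => α (n + t i)) (hα n).le (fun i => (hα _).le)
    refine h1.trans ?_
    have h2 : ∀ i ∈ range (2 * k),
        ‖α (n + t i) - α n‖ ^ 2 ≤ (l : ℝ) * g n := by
      intro i hi
      exact distLem α n (t i) l (ht i (Finset.mem_range.1 hi))
    have h3 : ∑ i ∈ range (2 * k), ‖α (n + t i) - α n‖ ^ 2
        ≤ 2 * (k : ℝ) * ((l : ℝ) * g n) := by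
      calc ∑ i ∈ range (2 * k), ‖α (n + t i) - α n‖ ^ 2
          ≤ ∑ _i ∈ range (2 * k), (l : ℝ) * g n := Finset.sum_le_sum h2
        _ = 2 * (k : ℝ) * ((l : ℝ) * g n) := by
            rw [Finset.sum_const, Finset.card_range, nsmul_eq_mul]
            push_cast; ring
    calc 27 * (k : ℝ) ^ 2 * ∑ i ∈ range (2 * k), ‖α (n + t i) - α n‖ ^ 2
        ≤ 27 * (k : ℝ) ^ 2 * (2 * (k : ℝ) * ((l : ℝ) * g n)) := by
          have : (0:ℝ) ≤ 27 * (k : ℝ) ^ 2 := by positivity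
          exact mul_le_mul_of_nonneg_left h3 this
      _ = K * g n := by rw [hK_def]; ring
  have hFsum : Summable F := by
    refine Summable.of_nonneg_of_le (fun n => abs_nonneg _) key (hgsum.mul_left K)
  refine ⟨hFsum, ?_⟩
  have htsum : ∑' n, F n ≤ K * ∑' n, g n := by
    calc ∑' n, F n ≤ ∑' n, K * g n := Summable.tsum_le_tsum key hFsum (hgsum.mul_left K)
      _ = K * ∑' n, g n := tsum_mul_left
  have hgle : ∑' n, g n ≤ (l : ℝ) * ∑' n, ‖α (n + 1) - α n‖ ^ 2 := by
    have h1 : ∑' n, g n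
        = ∑ m ∈ range l, ∑' n, ‖α (n + m + 1) - α (n + m)‖ ^ 2 :=
      Summable.tsum_finsetSum fun m _ => hgsm m
    rw [h1]
    have h2 : ∀ m ∈ range l, ∑' n, ‖α (n + m + 1) - α (n + m)‖ ^ 2
        ≤ ∑' n, ‖α (n + 1) - α n‖ ^ 2 := by
      intro m _
      have h3 := Summable.sum_add_tsum_nat_add (f := fun n => ‖α (n + 1) - α n‖ ^ 2) m hsum
      have h4 : (∑' n, ‖α (n + m + 1) - α (n + m)‖ ^ 2)
          = ∑' n, ‖α (n + m + 1) - α (n + m)‖ ^ 2 := rfl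
      have h5 : (∑' (n : ℕ), ‖α (n + m + 1) - α (n + m)‖ ^ 2)
          = ∑' (n : ℕ), ‖α (n + m + 1) - α (n + m)‖ ^ 2 := rfl
      have h6 : (∑' (i : ℕ), ‖α (i + m + 1) - α (i + m)‖ ^ 2)
          + ∑ i ∈ range m, ‖α (i + 1) - α i‖ ^ 2
          = ∑' n, ‖α (n + 1) - α n‖ ^ 2 := by
        rw [← h3, add_comm]
      have h7 : 0 ≤ ∑ i ∈ range m, ‖α (i + 1) - α i‖ ^ 2 :=
        Finset.sum_nonneg fun i _ => sq_nonneg _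
      linarith [h6]
    calc ∑ m ∈ range l, ∑' n, ‖α (n + m + 1) - α (n + m)‖ ^ 2
        ≤ ∑ _m ∈ range l, ∑' n, ‖α (n + 1) - α n‖ ^ 2 :=
          Finset.sum_le_sum h2
      _ = (l : ℝ) * ∑' n, ‖α (n + 1) - α n‖ ^ 2 := by
          rw [Finset.sum_const, Finset.card_range, nsmul_eq_mul]
  calc ∑' n, F n ≤ K * ∑' n, g n := htsum
    _ ≤ K * ((l : ℝ) * ∑' n, ‖α (n + 1) - α n‖ ^ 2) :=
        mul_le_mul_of_nonneg_left hgle hK0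
    _ = 27 * (k : ℝ) ^ 2 * (2 * (k : ℝ) * (l : ℝ)) * (l : ℝ)
          * ∑' n, ‖α (n + 1) - α n‖ ^ 2 := by rw [hK_def]; ring
end

section
/- Let k be an integer, η, φ real numbers with e^{−i(kη−φ)} ≠ 1, f a complex number, and g = f / (e^{−i(kη−φ)} − 1). Let Γ : ℕ → ℂ satisfy Γ_n → 0 and Σ_{n=0}^{∞} |e^{iφ} Γ_{n+1} − Γ_n| < ∞, and let θ : ℕ → ℝ be an arbitrary real sequence. Then the series S = Σ_{n=0}^{∞} ( f · Γ_n · e^{ik[(n+1)η + 2θ_n]} − g · Γ_n · e^{ik[(n+1)η + 2θ_n]} · ( e^{2ik(θ_{n+1} − θ_n)} − 1 ) ) is convergent, and |S| ≤ 2 |g| · Σ_{n=0}^{∞} |e^{iφ} Γ_{n+1} − Γ_n|. -/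
open Filter Complex

/-- Lemma 3.1: if `e^{−i(kη−φ)} ≠ 1`, `g = f/(e^{−i(kη−φ)} − 1)`, `Γ_n → 0` and
`Σ |e^{iφ}Γ_{n+1} − Γ_n| < ∞`, then the series
`S = Σ_n ( f Γ_n e^{ik[(n+1)η+2θ_n]} − g Γ_n e^{ik[(n+1)η+2θ_n]} (e^{2ik(θ_{n+1}−θ_n)} − 1) )`
converges and `|S| ≤ 2|g| Σ_n |e^{iφ}Γ_{n+1} − Γ_n|`. -/
theorem stmt_11 (k : ℤ) (η φ : ℝ)
    (hkφ : Complex.exp (-Complex.I * ((k : ℂ) * (η : ℂ) - (φ : ℂ))) ≠ 1)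
    (f g : ℂ)
    (hg : g = f / (Complex.exp (-Complex.I * ((k : ℂ) * (η : ℂ) - (φ : ℂ))) - 1))
    (Γ : ℕ → ℂ) (hΓ0 : Tendsto Γ atTop (nhds 0))
    (hΓbv : Summable (fun n => ‖Complex.exp (Complex.I * (φ : ℂ)) * Γ (n + 1) - Γ n‖))
    (θ : ℕ → ℝ) :
    ∃ S : ℂ,
      Tendsto
        (fun N => ∑ n ∈ Finset.range N,
          (f * Γ n * Complex.exp (Complex.I * (k : ℂ) * (((n : ℂ) + 1) * (η : ℂ) + 2 * (θ n : ℂ))) -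
            g * Γ n * Complex.exp (Complex.I * (k : ℂ) * (((n : ℂ) + 1) * (η : ℂ) + 2 * (θ n : ℂ))) *
              (Complex.exp (2 * Complex.I * (k : ℂ) * ((θ (n + 1) : ℂ) - (θ n : ℂ))) - 1)))
        atTop (nhds S) ∧
      ‖S‖ ≤
        2 * ‖g‖ *
          ∑' n : ℕ, ‖Complex.exp (Complex.I * (φ : ℂ)) * Γ (n + 1) - Γ n‖ := by
  set w : ℂ := Complex.exp (Complex.I * (φ : ℂ)) with hw
  set E : ℂ := Complex.exp (-Complex.I * ((k : ℂ) * (η : ℂ) - (φ : ℂ))) with hE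
  set u : ℂ := Complex.exp (-(Complex.I * (k : ℂ) * (η : ℂ))) with hu
  set A : ℕ → ℂ := fun n =>
    Complex.exp (Complex.I * (k : ℂ) * (((n : ℂ) + 1) * (η : ℂ) + 2 * (θ n : ℂ))) with hA
  set c : ℕ → ℂ := fun n => w * Γ (n + 1) - Γ n with hc
  set T : ℝ := ∑' n : ℕ, ‖w * Γ (n + 1) - Γ n‖ with hT
  have habsw : ‖w‖ = 1 := by
    simp [hw, Complex.norm_exp]
  have habsu : ‖u‖ = 1 := by
    simp [hu, Complex.norm_exp]
  have habsA : ∀ n, ‖A n‖ = 1 := by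
    intro n
    simp [hA, Complex.norm_exp]
  have hfE : f = g * (E - 1) := by
    rw [hg]
    exact (div_mul_cancel₀ f (sub_ne_zero.mpr hkφ)).symm
  -- exp identities
  have h2 : ∀ n, A n * E = u * (w * A n) := by
    intro n
    simp only [hA, hE, hu, hw, ← Complex.exp_add]
    congr 1
    ring
  have h3 : ∀ n,
      A n * Complex.exp (2 * Complex.I * (k : ℂ) * ((θ (n + 1) : ℂ) - (θ n : ℂ)))
        = u * A (n + 1) := by
    intro n
    simp only [hA, hu, ← Complex.exp_add]
    congr 1
    push_cast
    ring
  -- per-term identity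
  have hterm : ∀ n,
      f * Γ n * A n - g * Γ n * A n *
          (Complex.exp (2 * Complex.I * (k : ℂ) * ((θ (n + 1) : ℂ) - (θ n : ℂ))) - 1)
        = g * u * (A (n + 1) * c n - w * (A (n + 1) * Γ (n + 1) - A n * Γ n)) := by
    intro n
    rw [hfE]
    have e2 := h2 n
    have e3 := h3 n
    simp only [hc]
    linear_combination g * Γ n * e2 - g * Γ n * e3
  -- summability facts
  have hnormc : ∀ n, ‖c n‖ = ‖w * Γ (n + 1) - Γ n‖ := fun n => rfl
  have hcs : Summable fun n => ‖w * Γ (n + 1) - Γ n‖ := hΓbv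
  have hAc : Summable fun n => A (n + 1) * c n := by
    apply Summable.of_norm
    have : (fun n => ‖A (n + 1) * c n‖) = fun n => ‖w * Γ (n + 1) - Γ n‖ := by
      funext n
      simp [norm_mul, habsA, hnormc]
    rw [this]; exact hcs
  set S1 : ℂ := ∑' n, A (n + 1) * c n with hS1
  have hS1sum : HasSum (fun n => A (n + 1) * c n) S1 := hAc.hasSum
  have hS1le : ‖S1‖ ≤ T := by
    have := norm_tsum_le_tsum_norm (f := fun n => A (n + 1) * c n)
      (by
        have : (fun n => ‖A (n + 1) * c n‖) = fun n => ‖w * Γ (n + 1) - Γ n‖ := by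
          funext n; simp [norm_mul, habsA, hnormc]
        rw [this]; exact hcs)
    calc ‖S1‖ = ‖S1‖ := rfl
      _ ≤ ∑' n, ‖A (n + 1) * c n‖ := this
      _ = T := by
          rw [hT]
          apply tsum_congr
          intro n
          simp [norm_mul, habsA, hnormc]
  -- A N * Γ N → 0
  have hb0 : Tendsto (fun N => A N * Γ N) atTop (nhds 0) := by
    rw [tendsto_zero_iff_norm_tendsto_zero]
    have : (fun N => ‖A N * Γ N‖) = fun N => ‖Γ N‖ := by
      funext N; simp [norm_mul, habsA, hnormc]
    rw [this]
    exact tendsto_zero_iff_norm_tendsto_zero.mp hΓ0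
  -- |Γ 0| ≤ T
  have hΓ0le : ‖Γ 0‖ ≤ T := by
    have hsum2 : Summable fun n => ‖w ^ n * c n‖ := by
      have : (fun n => ‖w ^ n * c n‖) = fun n => ‖w * Γ (n + 1) - Γ n‖ := by
        funext n; simp [norm_mul, norm_pow, habsw, hnormc]
      rw [this]; exact hcs
    have hsum2' : Summable fun n => w ^ n * c n := Summable.of_norm hsum2
    have hps : ∀ N, ∑ n ∈ Finset.range N, w ^ n * c n = w ^ N * Γ N - Γ 0 := by
      intro N
      have : ∀ n, w ^ n * c n = w ^ (n + 1) * Γ (n + 1) - w ^ n * Γ n := by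
        intro n; simp only [hc]; ring
      rw [Finset.sum_congr rfl (fun n _ => this n),
        Finset.sum_range_sub (fun n => w ^ n * Γ n)]
      simp
    have hlim1 : Tendsto (fun N => ∑ n ∈ Finset.range N, w ^ n * c n) atTop
        (nhds (∑' n, w ^ n * c n)) := hsum2'.hasSum.tendsto_sum_nat
    have hwΓ : Tendsto (fun N => w ^ N * Γ N) atTop (nhds 0) := by
      rw [tendsto_zero_iff_norm_tendsto_zero]
      have : (fun N => ‖w ^ N * Γ N‖) = fun N => ‖Γ N‖ := by
        funext N; simp [norm_mul, norm_pow, habsw, hnormc]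
      rw [this]
      exact tendsto_zero_iff_norm_tendsto_zero.mp hΓ0
    have hlim2 : Tendsto (fun N => ∑ n ∈ Finset.range N, w ^ n * c n) atTop
        (nhds (0 - Γ 0)) := by
      simp only [hps]
      exact hwΓ.sub tendsto_const_nhds
    have heq : (∑' n, w ^ n * c n) = 0 - Γ 0 :=
      tendsto_nhds_unique hlim1 hlim2
    have : ‖Γ 0‖ = ‖∑' n, w ^ n * c n‖ := by
      rw [heq]; simp
    rw [this]
    calc ‖∑' n, w ^ n * c n‖ ≤ ∑' n, ‖w ^ n * c n‖ := norm_tsum_le_tsum_norm hsum2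
      _ = T := by
          rw [hT]; apply tsum_congr; intro n
          simp [norm_mul, norm_pow, habsw, hnormc]
  -- partial sums of the main series
  have hps : ∀ N, (∑ n ∈ Finset.range N,
      (f * Γ n * A n - g * Γ n * A n *
        (Complex.exp (2 * Complex.I * (k : ℂ) * ((θ (n + 1) : ℂ) - (θ n : ℂ))) - 1)))
      = g * u * ((∑ n ∈ Finset.range N, A (n + 1) * c n)
          - w * (A N * Γ N - A 0 * Γ 0)) := by
    intro N
    rw [Finset.sum_congr rfl (fun n _ => hterm n),
      ← Finset.sum_range_sub (fun n => A n * Γ n)]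
    simp only [mul_sub, Finset.mul_sum, ← Finset.sum_sub_distrib]
  refine ⟨g * u * (S1 + w * (A 0 * Γ 0)), ?_, ?_⟩
  · have : Tendsto (fun N => g * u * ((∑ n ∈ Finset.range N, A (n + 1) * c n)
        - w * (A N * Γ N - A 0 * Γ 0))) atTop
        (nhds (g * u * (S1 - w * (0 - A 0 * Γ 0)))) := by
      apply Tendsto.const_mul
      exact (hS1sum.tendsto_sum_nat).sub
        (Tendsto.const_mul w (hb0.sub tendsto_const_nhds))
    have h0 : g * u * (S1 - w * (0 - A 0 * Γ 0)) = g * u * (S1 + w * (A 0 * Γ 0)) := by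
      ring
    rw [h0] at this
    exact this.congr (fun N => (hps N).symm)
  · have h1 : ‖g * u * (S1 + w * (A 0 * Γ 0))‖
        = ‖g‖ * ‖S1 + w * (A 0 * Γ 0)‖ := by
      rw [norm_mul, norm_mul, habsu, mul_one]
    rw [h1]
    have h2' : ‖S1 + w * (A 0 * Γ 0)‖
        ≤ ‖S1‖ + ‖Γ 0‖ := by
      calc ‖S1 + w * (A 0 * Γ 0)‖
          ≤ ‖S1‖ + ‖w * (A 0 * Γ 0)‖ := by
            exact norm_add_le _ _
        _ = ‖S1‖ + ‖Γ 0‖ := by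
            rw [norm_mul, norm_mul, habsw, habsA, one_mul, one_mul]
    have h3' : ‖S1‖ + ‖Γ 0‖ ≤ 2 * T := by
      have := add_le_add hS1le hΓ0le
      linarith
    calc ‖g‖ * ‖S1 + w * (A 0 * Γ 0)‖
        ≤ ‖g‖ * (2 * T) := by
          apply mul_le_mul_of_nonneg_left _ (norm_nonneg g)
          exact le_trans h2' h3'
      _ = 2 * ‖g‖ * T := by ring
end

section
/- Let k be an integer, η, φ real numbers, f a complex number, and g a complex number with g · (e^{−i(kη−φ)} − 1) = f. Let Γ : ℕ → ℂ and θ : ℕ → ℝ be arbitrary sequences, and let M, N be natural numbers with M < N. Then | Σ_{n=M}^{N−1} ( f · Γ_n · e^{ik[(n+1)η + 2θ_n]} − g · Γ_n · e^{ik[(n+1)η + 2θ_n]} · ( e^{2ik(θ_{n+1} − θ_n)} − 1 ) ) | ≤ |g| · ( |Γ_M| + |Γ_{N−1}| + Σ_{n=M}^{N−2} |e^{iφ} Γ_{n+1} − Γ_n| ). -/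
private lemma abel_sum (a b : ℕ → ℂ) (M N : ℕ) (hMN : M < N) :
    ∑ n ∈ Finset.Ico M N, (a n - b n)
      = a M - b (N - 1) + ∑ n ∈ Finset.Ico M (N - 1), (a (n + 1) - b n) := by
  induction N, hMN using Nat.le_induction with
  | base =>
      simp [Finset.sum_Ico_eq_sum_range]
  | succ N hN ih =>
      rw [Finset.sum_Ico_succ_top (le_of_lt hN)]
      rw [ih]
      have h1 : N + 1 - 1 = N := rfl
      have h2 : N - 1 + 1 = N := Nat.succ_pred_eq_of_pos (Nat.lt_of_lt_of_le (Nat.zero_lt_succ M) hN)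
      rw [h1]
      rw [show Finset.Ico M N = Finset.Ico M (N - 1 + 1) by rw [h2]]
      rw [Finset.sum_Ico_succ_top (by omega : M ≤ N - 1), h2]
      ring

private lemma abs_exp_I_mul (r : ℝ) : ‖Complex.exp (Complex.I * (r : ℂ))‖ = 1 := by
  rw [mul_comm, Complex.norm_exp_ofReal_mul_I]

/-- Partial-sum bound: if `g (e^{−i(kη−φ)} − 1) = f` and `M < N`, then
`|Σ_{n=M}^{N−1} ( f Γ_n e^{ik[(n+1)η+2θ_n]} − g Γ_n e^{ik[(n+1)η+2θ_n]} (e^{2ik(θ_{n+1}−θ_n)} − 1) )|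
  ≤ |g| ( |Γ_M| + |Γ_{N−1}| + Σ_{n=M}^{N−2} |e^{iφ}Γ_{n+1} − Γ_n| )`. -/
theorem stmt_12 (k : ℤ) (η φ : ℝ) (f g : ℂ)
    (hg : g * (Complex.exp (-Complex.I * ((k : ℂ) * (η : ℂ) - (φ : ℂ))) - 1) = f)
    (Γ : ℕ → ℂ) (θ : ℕ → ℝ) (M N : ℕ) (hMN : M < N) :
    ‖(∑ n ∈ Finset.Ico M N,
          (f * Γ n * Complex.exp (Complex.I * (k : ℂ) * (((n : ℂ) + 1) * (η : ℂ) + 2 * (θ n : ℂ))) -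
            g * Γ n * Complex.exp (Complex.I * (k : ℂ) * (((n : ℂ) + 1) * (η : ℂ) + 2 * (θ n : ℂ))) *
              (Complex.exp (2 * Complex.I * (k : ℂ) * ((θ (n + 1) : ℂ) - (θ n : ℂ))) - 1)))‖ ≤
      ‖g‖ *
        (‖Γ M‖ + ‖Γ (N - 1)‖ +
          ∑ n ∈ Finset.Ico M (N - 1),
            ‖Complex.exp (Complex.I * (φ : ℂ)) * Γ (n + 1) - Γ n‖) := by
  set a : ℕ → ℂ := fun n =>
    Complex.exp (Complex.I * (φ : ℂ)) * Γ n *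
      Complex.exp (Complex.I * (k : ℂ) * ((n : ℂ) * (η : ℂ) + 2 * (θ n : ℂ))) with ha
  set b : ℕ → ℂ := fun n =>
    Γ n * Complex.exp (Complex.I * (k : ℂ) * (((n : ℂ) + 1) * (η : ℂ) + 2 * (θ (n + 1) : ℂ))) with hb
  have key : ∀ n : ℕ,
      (f * Γ n * Complex.exp (Complex.I * (k : ℂ) * (((n : ℂ) + 1) * (η : ℂ) + 2 * (θ n : ℂ))) -
        g * Γ n * Complex.exp (Complex.I * (k : ℂ) * (((n : ℂ) + 1) * (η : ℂ) + 2 * (θ n : ℂ))) *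
          (Complex.exp (2 * Complex.I * (k : ℂ) * ((θ (n + 1) : ℂ) - (θ n : ℂ))) - 1))
      = g * (a n - b n) := by
    intro n
    have e1 : Complex.exp (Complex.I * (φ : ℂ)) *
        Complex.exp (Complex.I * (k : ℂ) * ((n : ℂ) * (η : ℂ) + 2 * (θ n : ℂ)))
        = Complex.exp (-Complex.I * ((k : ℂ) * (η : ℂ) - (φ : ℂ))) *
          Complex.exp (Complex.I * (k : ℂ) * (((n : ℂ) + 1) * (η : ℂ) + 2 * (θ n : ℂ))) := by
      rw [← Complex.exp_add, ← Complex.exp_add]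
      ring_nf
    have e2 : Complex.exp (Complex.I * (k : ℂ) * (((n : ℂ) + 1) * (η : ℂ) + 2 * (θ (n + 1) : ℂ)))
        = Complex.exp (Complex.I * (k : ℂ) * (((n : ℂ) + 1) * (η : ℂ) + 2 * (θ n : ℂ))) *
          Complex.exp (2 * Complex.I * (k : ℂ) * ((θ (n + 1) : ℂ) - (θ n : ℂ))) := by
      rw [← Complex.exp_add]
      ring_nf
    simp only [ha, hb]
    rw [← hg]
    rw [e2]
    calc g * (Complex.exp (-Complex.I * ((k : ℂ) * (η : ℂ) - (φ : ℂ))) - 1) * Γ n *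
            Complex.exp (Complex.I * (k : ℂ) * (((n : ℂ) + 1) * (η : ℂ) + 2 * (θ n : ℂ))) -
          g * Γ n * Complex.exp (Complex.I * (k : ℂ) * (((n : ℂ) + 1) * (η : ℂ) + 2 * (θ n : ℂ))) *
            (Complex.exp (2 * Complex.I * (k : ℂ) * ((θ (n + 1) : ℂ) - (θ n : ℂ))) - 1)
        = g * ((Complex.exp (-Complex.I * ((k : ℂ) * (η : ℂ) - (φ : ℂ))) *
              Complex.exp (Complex.I * (k : ℂ) * (((n : ℂ) + 1) * (η : ℂ) + 2 * (θ n : ℂ)))) * Γ n -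
            Γ n * (Complex.exp (Complex.I * (k : ℂ) * (((n : ℂ) + 1) * (η : ℂ) + 2 * (θ n : ℂ))) *
              Complex.exp (2 * Complex.I * (k : ℂ) * ((θ (n + 1) : ℂ) - (θ n : ℂ))))) := by ring
      _ = _ := by rw [← e1]; ring
  rw [Finset.sum_congr rfl (fun n _ => key n), ← Finset.mul_sum, norm_mul]
  have habs_a : ∀ n : ℕ, ‖a n‖ = ‖Γ n‖ := by
    intro n
    simp only [ha]
    rw [norm_mul, norm_mul]
    rw [show Complex.I * (k : ℂ) * ((n : ℂ) * (η : ℂ) + 2 * (θ n : ℂ))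
        = Complex.I * (((k : ℝ) * ((n : ℝ) * η + 2 * θ n) : ℝ) : ℂ) by push_cast; ring]
    rw [abs_exp_I_mul, abs_exp_I_mul]
    ring
  have habs_b : ∀ n : ℕ, ‖b n‖ = ‖Γ n‖ := by
    intro n
    simp only [hb]
    rw [norm_mul]
    rw [show Complex.I * (k : ℂ) * (((n : ℂ) + 1) * (η : ℂ) + 2 * (θ (n + 1) : ℂ))
        = Complex.I * (((k : ℝ) * (((n : ℝ) + 1) * η + 2 * θ (n + 1)) : ℝ) : ℂ) by push_cast; ring]
    rw [abs_exp_I_mul]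
    ring
  have habs_d : ∀ n : ℕ, ‖a (n + 1) - b n‖
      = ‖Complex.exp (Complex.I * (φ : ℂ)) * Γ (n + 1) - Γ n‖ := by
    intro n
    simp only [ha, hb]
    have : Complex.exp (Complex.I * (φ : ℂ)) * Γ (n + 1) *
          Complex.exp (Complex.I * (k : ℂ) * (((n : ℕ) + 1 : ℂ) * (η : ℂ) + 2 * (θ (n + 1) : ℂ))) -
        Γ n * Complex.exp (Complex.I * (k : ℂ) * (((n : ℂ) + 1) * (η : ℂ) + 2 * (θ (n + 1) : ℂ)))
        = (Complex.exp (Complex.I * (φ : ℂ)) * Γ (n + 1) - Γ n) *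
          Complex.exp (Complex.I * (k : ℂ) * (((n : ℂ) + 1) * (η : ℂ) + 2 * (θ (n + 1) : ℂ))) := by
      ring
    rw [show ((n + 1 : ℕ) : ℂ) = (n : ℂ) + 1 by push_cast; ring] at *
    rw [this, norm_mul]
    rw [show Complex.I * (k : ℂ) * (((n : ℂ) + 1) * (η : ℂ) + 2 * (θ (n + 1) : ℂ))
        = Complex.I * (((k : ℝ) * (((n : ℝ) + 1) * η + 2 * θ (n + 1)) : ℝ) : ℂ) by push_cast; ring]
    rw [abs_exp_I_mul, mul_one]
  rw [abel_sum a b M N hMN]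
  gcongr
  calc ‖a M - b (N - 1) + ∑ n ∈ Finset.Ico M (N - 1), (a (n + 1) - b n)‖
      ≤ ‖a M - b (N - 1)‖ +
        ‖∑ n ∈ Finset.Ico M (N - 1), (a (n + 1) - b n)‖ := norm_add_le _ _
    _ ≤ (‖a M‖ + ‖b (N - 1)‖) +
        ∑ n ∈ Finset.Ico M (N - 1), ‖a (n + 1) - b n‖ := by
        gcongr
        · exact norm_sub_le _ _
        · exact norm_sum_le _ _
    _ = ‖Γ M‖ + ‖Γ (N - 1)‖ +
        ∑ n ∈ Finset.Ico M (N - 1), ‖Complex.exp (Complex.I * (φ : ℂ)) * Γ (n + 1) - Γ n‖ := by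
        rw [habs_a, habs_b]
        congr 1
        exact Finset.sum_congr rfl (fun n _ => habs_d n)
end
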